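/- arXiv:math/0504247 — 2 statements merged into one kernel-verified Lean document; each statement's English description precedes it below -/
import Mathlib

section
/- Suppose each restriction p_e|_{K_{i(e)}} is Dini-continuous and bounded below by some δ > 0. Then for every x ∈ K and every m ≤ 0, the measure P^m_x is absolutely continuous with respect to P^m_{x_1...x_N}. -/
open MeasureTheory ENNReal Filter

/-- A contractive Markov system on a metric space `K` with vertex type `V` and edge type `E`. -/
structure CMS (E V K : Type*) [Fintype E] [MetricSpace K] [MeasurableSpace K] where
  i : E → V
  t : E → V
  Ks : V → Set K
  w : E → K → K
  p : E → K → ℝ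
  a : ℝ
  ha0 : 0 < a
  ha1 : a < 1
  Ks_nonempty : ∀ v, (Ks v).Nonempty
  Ks_meas : ∀ v, MeasurableSet (Ks v)
  Ks_disj : ∀ v v', v ≠ v' → Disjoint (Ks v) (Ks v')
  Ks_cover : ∀ x : K, ∃ v, x ∈ Ks v
  w_meas : ∀ e, Measurable (w e)
  p_meas : ∀ e, Measurable (p e)
  p_nonneg : ∀ e x, 0 ≤ p e x
  p_sum : ∀ x : K, ∑ e, p e x = 1
  p_zero : ∀ e, ∀ x ∉ Ks (i e), p e x = 0
  w_maps : ∀ e, Set.MapsTo (w e) (Ks (i e)) (Ks (t e))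
  contractive : ∀ v, ∀ x ∈ Ks v, ∀ y ∈ Ks v,
      ∑ e, p e x * dist (w e x) (w e y) ≤ a * dist x y

variable {E V K : Type*} [Fintype E] [MetricSpace K] [MeasurableSpace K]

/-- `S.orbit e m x j = w_{e_{m+j}} ∘ ⋯ ∘ w_{e_m} (x)`. -/
def CMS.orbit (S : CMS E V K) (e : ℤ → E) (m : ℤ) (x : K) : ℕ → K
  | 0 => S.w (e m) x
  | j + 1 => S.w (e (m + j + 1)) (S.orbit e m x j)

/-- `S.pathProb e m x j = p_{e_m}(x) p_{e_{m+1}}(w_{e_m}x) ⋯ p_{e_{m+j}}(w_{e_{m+j-1}}∘⋯∘w_{e_m}x)`. -/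
def CMS.pathProb (S : CMS E V K) (e : ℤ → E) (m : ℤ) (x : K) : ℕ → ℝ
  | 0 => S.p (e m) x
  | j + 1 => S.pathProb e m x j * S.p (e (m + j + 1)) (S.orbit e m x j)

/-- The σ-algebra `𝒜_m` on `Σ = E^ℤ` generated by the coordinates with index `≥ m`. -/
def Am (E : Type*) (m : ℤ) : MeasurableSpace (ℤ → E) :=
  ⨆ (i : ℤ) (_ : m ≤ i), MeasurableSpace.comap (fun σ => σ i) ⊤

/-- The cylinder `_m[e_m, …, e_{m+j}]`. -/
def cyl (m : ℤ) (j : ℕ) (e : ℤ → E) : Set (ℤ → E) :=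
  {σ | ∀ k : ℤ, m ≤ k → k ≤ m + j → σ k = e k}

/-- `P` is the family of Markov measures `P^m_x` on `(Σ, 𝒜_m)` of the CMS `S`. -/
def IsKernel (S : CMS E V K) (P : ∀ m : ℤ, K → @Measure (ℤ → E) (Am E m)) : Prop :=
  (∀ (m : ℤ) (x : K), @IsProbabilityMeasure _ (Am E m) (P m x)) ∧
  ∀ (m : ℤ) (x : K) (e : ℤ → E) (j : ℕ),
    P m x (cyl m j e) = ENNReal.ofReal (S.pathProb e m x j)

/-- The `m`-th lift `Φ_m(ν)(A) = ∫ P^m_x(A) dν(x)`. -/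
noncomputable def liftMeas (P : ∀ m : ℤ, K → @Measure (ℤ → E) (Am E m))
    (m : ℤ) (ν : Measure K) (A : Set (ℤ → E)) : ℝ≥0∞ :=
  ∫⁻ x, P m x A ∂ν

/-- The lift outer measure `Φ(ν)`, via coverings `B ⊆ ⋃_{m ≤ 0} A_m`, `A_m ∈ 𝒜_m` (indexed by `m = -n`). -/
noncomputable def PhiM (P : ∀ m : ℤ, K → @Measure (ℤ → E) (Am E m))
    (ν : Measure K) (B : Set (ℤ → E)) : ℝ≥0∞ :=
  ⨅ (A : ℕ → Set (ℤ → E)) (_ : ∀ n : ℕ, MeasurableSet[Am E (-(n : ℤ))] (A n))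
    (_ : B ⊆ ⋃ n, A n), ∑' n : ℕ, liftMeas P (-(n : ℤ)) ν (A n)

/-- `Y^{x_1…x_N}_{m0}(σ) = w_{σ_0}∘⋯∘w_{σ_m}(x_{i(σ_m)})`. -/
noncomputable def CMS.Y (S : CMS E V K) (xs : V → K) (m : ℤ) (σ : ℤ → E) : K :=
  S.orbit σ m (xs (S.i (σ m))) (-m).toNat

/-- The uniform measure `(1/N) ∑_i δ_{x_i}`. -/
noncomputable def unif [Fintype V] (xs : V → K) : Measure K :=
  ((Fintype.card V : ℝ≥0∞))⁻¹ • ∑ v : V, Measure.dirac (xs v)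

/-- The measure `P^m_{x_1…x_N} = Φ_m((1/N)∑δ_{x_i}) = (1/N)∑_i P^m_{x_i}`. -/
noncomputable def PmMix [Fintype V] (P : ∀ m : ℤ, K → @Measure (ℤ → E) (Am E m))
    (xs : V → K) (m : ℤ) : @Measure (ℤ → E) (Am E m) :=
  ((Fintype.card V : ℝ≥0∞))⁻¹ • ∑ v : V, P m (xs v)


section Helpers
set_option linter.unusedSectionVars false
open scoped Classical

namespace S9

open MeasurableSpace

variable {E V K : Type*} [Fintype E] [MetricSpace K] [MeasurableSpace K]

/-- The word of `σ` in the window `[m, m+j]`. -/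
def word (m : ℤ) (j : ℕ) (σ : ℤ → E) : Fin (j + 1) → E := fun k => σ (m + (k : ℕ))

/-- Extension of a word to a function on `ℤ` (by clamping). -/
def wx (m : ℤ) (j : ℕ) (w : Fin (j + 1) → E) : ℤ → E :=
  fun z => w ⟨min (z - m).toNat j, Nat.lt_succ_of_le (min_le_right _ _)⟩

lemma wx_apply (m : ℤ) (j : ℕ) (w : Fin (j + 1) → E) (k : ℕ) (hk : k ≤ j)
    {z : ℤ} (hz : z = m + (k : ℕ)) :
    wx m j w z = w ⟨k, Nat.lt_succ_of_le hk⟩ := by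
  have h1 : (z - m).toNat = k := by omega
  unfold wx
  congr 1
  exact Fin.ext (by simp [h1, min_eq_left hk])

lemma mem_cyl_wx (m : ℤ) (j : ℕ) (w : Fin (j + 1) → E) (σ : ℤ → E) :
    σ ∈ cyl m j (wx m j w) ↔ word m j σ = w := by
  constructor
  · intro h
    funext k
    have hk : (k : ℕ) ≤ j := Nat.lt_succ_iff.mp k.isLt
    have h2 := h (m + (k : ℕ)) (by omega) (by omega)
    rw [wx_apply m j w k hk rfl] at h2
    simpa [word] using h2
  · rintro rfl k hk1 hk2
    have h0 : (0:ℤ) ≤ k - m := by omega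
    have hkkj : (k - m).toNat ≤ j := by omega
    rw [wx_apply m j _ _ hkkj (by omega)]
    show σ k = σ (m + ((k - m).toNat : ℕ))
    congr 1
    omega

lemma mem_cyl_wx_self (m : ℤ) (j : ℕ) (σ : ℤ → E) : σ ∈ cyl m j (wx m j (word m j σ)) :=
  (mem_cyl_wx m j _ σ).2 rfl

lemma cyl_wx_disj (m : ℤ) (j : ℕ) {w w' : Fin (j + 1) → E} (h : w ≠ w') :
    Disjoint (cyl m j (wx m j w)) (cyl m j (wx m j w')) := by
  rw [Set.disjoint_left]
  intro σ h1 h2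
  rw [mem_cyl_wx] at h1 h2
  exact h (h1.symm.trans h2)

lemma cyl_congr (m : ℤ) (j : ℕ) {e e' : ℤ → E}
    (h : ∀ k : ℕ, k ≤ j → e (m + (k : ℕ)) = e' (m + (k : ℕ))) :
    cyl m j e = cyl m j e' := by
  ext σ
  constructor <;> intro hσ k hk1 hk2
  · rw [hσ k hk1 hk2]
    have : k = m + ((k - m).toNat : ℕ) := by omega
    rw [this]
    exact h _ (by omega)
  · rw [hσ k hk1 hk2]
    have : k = m + ((k - m).toNat : ℕ) := by omega
    rw [this]
    exact (h _ (by omega)).symm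

lemma cyl_eq_wx_word (m : ℤ) (j : ℕ) (e : ℤ → E) :
    cyl m j e = cyl m j (wx m j (word m j e)) := by
  apply cyl_congr
  intro k hk
  rw [wx_apply m j _ k hk rfl]
  rfl

/-- The finite-union-of-level-`j`-cylinders set determined by a finite set of words. -/
def Wset (m : ℤ) (j : ℕ) (F : Finset (Fin (j + 1) → E)) : Set (ℤ → E) :=
  {σ | word m j σ ∈ F}

lemma mem_Wset {m : ℤ} {j : ℕ} {F : Finset (Fin (j + 1) → E)} {σ : ℤ → E} :
    σ ∈ Wset m j F ↔ word m j σ ∈ F := Iff.rfl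

lemma Wset_eq_biUnion (m : ℤ) (j : ℕ) (F : Finset (Fin (j + 1) → E)) :
    Wset m j F = ⋃ w ∈ F, cyl m j (wx m j w) := by
  ext σ
  simp only [Set.mem_iUnion, mem_cyl_wx, mem_Wset]
  exact ⟨fun h => ⟨_, h, rfl⟩, fun ⟨w, hw, he⟩ => he ▸ hw⟩

lemma Wset_compl (m : ℤ) (j : ℕ) (F : Finset (Fin (j + 1) → E)) :
    (Wset m j F)ᶜ = Wset m j (Finset.univ \ F) := by
  ext σ
  simp [mem_Wset]

lemma Wset_union (m : ℤ) (j : ℕ) (F G : Finset (Fin (j + 1) → E)) :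
    Wset m j F ∪ Wset m j G = Wset m j (F ∪ G) := by
  ext σ
  simp [mem_Wset]

lemma Wset_lift (m : ℤ) (j : ℕ) (F : Finset (Fin (j + 1) → E)) :
    ∀ j', j ≤ j' → ∃ F' : Finset (Fin (j' + 1) → E), Wset m j F = Wset m j' F' := by
  intro j' hj'
  classical
  induction j' with
  | zero =>
    have : j = 0 := Nat.le_zero.mp hj'
    subst this
    exact ⟨F, rfl⟩
  | succ j'' ih =>
    rcases Nat.lt_or_ge j (j'' + 1) with h | h
    · obtain ⟨F', hF'⟩ := ih (by omega)
      refine ⟨Finset.univ.filter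
        (fun w : Fin (j'' + 1 + 1) → E => (fun k : Fin (j'' + 1) => w ⟨k, by omega⟩) ∈ F'), ?_⟩
      rw [hF']
      ext σ
      simp only [mem_Wset, Finset.mem_filter, Finset.mem_univ, true_and]
      constructor
      · intro h2
        convert h2 using 2
        rfl
      · intro h2
        convert h2 using 2
        rfl
    · have : j = j'' + 1 := by omega
      subst this
      exact ⟨F, rfl⟩


lemma measurableSet_cyl (m : ℤ) (j : ℕ) (e : ℤ → E) :
    MeasurableSet[Am E m] (cyl m j e) := by
  have hcomap : ∀ i : ℤ, m ≤ i → ∀ s : Set E,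
      MeasurableSet[Am E m] ((fun σ : ℤ → E => σ i) ⁻¹' s) := by
    intro i hi s
    have h1 : MeasurableSpace.comap (fun σ : ℤ → E => σ i) ⊤ ≤ Am E m :=
      le_iSup_of_le i (le_iSup_of_le hi le_rfl)
    exact h1 _ ⟨s, trivial, rfl⟩
  have hc : cyl m j e = ⋂ k ∈ Finset.Icc m (m + (j:ℕ)), (fun σ : ℤ → E => σ k) ⁻¹' {e k} := by
    ext σ
    simp only [Set.mem_iInter, Finset.mem_Icc, Set.mem_preimage, Set.mem_singleton_iff]
    exact ⟨fun h k hk => h k hk.1 hk.2, fun h k h1 h2 => h k ⟨h1, h2⟩⟩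
  rw [hc]
  exact Finset.measurableSet_biInter _ fun k hk => hcomap k (Finset.mem_Icc.mp hk).1 _

lemma measurableSet_Wset (m : ℤ) (j : ℕ) (F : Finset (Fin (j + 1) → E)) :
    MeasurableSet[Am E m] (Wset m j F) := by
  rw [Wset_eq_biUnion]
  exact Finset.measurableSet_biUnion _ fun w _ => measurableSet_cyl m j (wx m j w)

/-- The collection of all cylinders. -/
def Cyls (E : Type*) (m : ℤ) : Set (Set (ℤ → E)) := {s | ∃ j e, s = cyl m j e}

lemma isPiSystem_Cyls (m : ℤ) : IsPiSystem (Cyls E m) := by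
  have key : ∀ (j1 j2 : ℕ) (e1 e2 : ℤ → E), j1 ≤ j2 →
      (cyl m j1 e1 ∩ cyl m j2 e2 : Set (ℤ → E)).Nonempty →
      cyl m j1 e1 ∩ cyl m j2 e2 = cyl m j2 e2 := by
    rintro j1 j2 e1 e2 hj ⟨σ0, h01, h02⟩
    have hsub : cyl m j2 e2 ⊆ cyl m j1 e1 := by
      intro τ hτ k hk1 hk2
      have hk2' : k ≤ m + (j2:ℕ) := by omega
      rw [hτ k hk1 hk2', ← h02 k hk1 hk2', h01 k hk1 hk2]
    rw [Set.inter_eq_self_of_subset_right hsub]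
  rintro s ⟨j1, e1, rfl⟩ t ⟨j2, e2, rfl⟩ hne
  rcases le_total j1 j2 with h | h
  · rw [key j1 j2 e1 e2 h hne]; exact ⟨j2, e2, rfl⟩
  · rw [Set.inter_comm, key j2 j1 e2 e1 h (by rwa [Set.inter_comm] at hne)]
    exact ⟨j1, e1, rfl⟩

lemma Am_eq_generateFrom (m : ℤ) :
    Am E m = MeasurableSpace.generateFrom (Cyls E m) := by
  apply le_antisymm
  · apply iSup_le; intro i; apply iSup_le; intro hi
    have key : ∀ S : Set E,
        MeasurableSet[MeasurableSpace.generateFrom (Cyls E m)] ((fun σ : ℤ → E => σ i) ⁻¹' S) := by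
      intro S
      have hU : (fun σ : ℤ → E => σ i) ⁻¹' S = ⋃ e0 ∈ S, (fun σ : ℤ → E => σ i) ⁻¹' {e0} := by
        ext; simp
      rw [hU]
      apply MeasurableSet.biUnion (Set.to_countable S)
      intro e0 _
      set j := (i - m).toNat with hj
      have hrep : (fun σ : ℤ → E => σ i) ⁻¹' {e0} =
          ⋃ (w : Fin (j+1) → E) (_ : w ⟨j, j.lt_succ_self⟩ = e0), cyl m j (wx m j w) := by
        ext σ
        simp only [Set.mem_preimage, Set.mem_singleton_iff, Set.mem_iUnion, mem_cyl_wx]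
        constructor
        · intro h
          refine ⟨word m j σ, ?_, rfl⟩
          show σ (m + (j:ℕ)) = e0
          rwa [show m + (j:ℕ) = i by omega]
        · rintro ⟨w, hw, rfl⟩
          show σ i = e0
          rw [show i = m + (j:ℕ) by omega]
          exact hw
      rw [hrep]
      apply MeasurableSet.iUnion
      intro w
      apply MeasurableSet.iUnion
      intro _
      exact MeasurableSpace.measurableSet_generateFrom ⟨j, _, rfl⟩
    rw [MeasurableSpace.le_def]
    rintro s ⟨S, -, rfl⟩
    exact key S
  · apply MeasurableSpace.generateFrom_le
    rintro s ⟨j, e, rfl⟩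
    exact measurableSet_cyl m j e

section CMSlemmas

variable {V : Type*}

lemma orbit_congr (S : CMS E V K) {e e' : ℤ → E} (m : ℤ) {j : ℕ}
    (h : ∀ k : ℕ, k ≤ j → e (m + (k:ℕ)) = e' (m + (k:ℕ))) (x : K) :
    ∀ kk, kk ≤ j → S.orbit e m x kk = S.orbit e' m x kk := by
  intro kk
  induction kk with
  | zero =>
    intro _
    have h0 := h 0 (Nat.zero_le j)
    simp only [Nat.cast_zero, add_zero] at h0
    simp [CMS.orbit, h0]
  | succ kk ih =>
    intro hkk
    have h1 := h (kk+1) hkk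
    have hc : (m + ((kk+1:ℕ) :ℤ)) = m + (kk:ℕ) + 1 := by push_cast; ring
    rw [hc] at h1
    simp only [CMS.orbit]
    rw [ih (by omega), h1]

lemma pathProb_congr (S : CMS E V K) {e e' : ℤ → E} (m : ℤ) {j : ℕ}
    (h : ∀ k : ℕ, k ≤ j → e (m + (k:ℕ)) = e' (m + (k:ℕ))) (x : K) :
    ∀ kk, kk ≤ j → S.pathProb e m x kk = S.pathProb e' m x kk := by
  intro kk
  induction kk with
  | zero =>
    intro _
    have h0 := h 0 (Nat.zero_le j)
    simp only [Nat.cast_zero, add_zero] at h0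
    simp [CMS.pathProb, h0]
  | succ kk ih =>
    intro hkk
    have h1 := h (kk+1) hkk
    have hc : (m + ((kk+1:ℕ) :ℤ)) = m + (kk:ℕ) + 1 := by push_cast; ring
    rw [hc] at h1
    simp only [CMS.pathProb]
    rw [ih (by omega), h1, orbit_congr S m h x kk (by omega)]

lemma p_le_one (S : CMS E V K) (e : E) (x : K) : S.p e x ≤ 1 := by
  have h := S.p_sum x
  calc S.p e x ≤ ∑ e', S.p e' x :=
        Finset.single_le_sum (fun i _ => S.p_nonneg i x) (Finset.mem_univ e)
    _ = 1 := h

lemma pathProb_nonneg (S : CMS E V K) (e : ℤ → E) (m : ℤ) (x : K) :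
    ∀ j, 0 ≤ S.pathProb e m x j
  | 0 => S.p_nonneg _ _
  | (j+1) => mul_nonneg (pathProb_nonneg S e m x j) (S.p_nonneg _ _)

lemma pathProb_le_one (S : CMS E V K) (e : ℤ → E) (m : ℤ) (x : K) :
    ∀ j, S.pathProb e m x j ≤ 1
  | 0 => p_le_one S _ _
  | (j+1) => mul_le_one₀ (pathProb_le_one S e m x j) (S.p_nonneg _ _) (p_le_one S _ _)

lemma pathProb_zero_first (S : CMS E V K) (e : ℤ → E) (m : ℤ) (x : K)
    (h : S.p (e m) x = 0) : ∀ j, S.pathProb e m x j = 0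
  | 0 => h
  | (j+1) => by
      simp only [CMS.pathProb]
      rw [pathProb_zero_first S e m x h j, zero_mul]

lemma first_mem (S : CMS E V K) {e : ℤ → E} {m : ℤ} {x : K} {j : ℕ}
    (h : S.pathProb e m x j ≠ 0) : x ∈ S.Ks (S.i (e m)) := by
  by_contra hx
  exact h (pathProb_zero_first S e m x (S.p_zero _ _ hx) j)

lemma alive (S : CMS E V K) (e : ℤ → E) (m : ℤ) (x z : K)
    (hz : z ∈ S.Ks (S.i (e m))) :
    ∀ j, S.pathProb e m x j ≠ 0 →
      S.orbit e m x j ∈ S.Ks (S.t (e (m + (j:ℕ)))) ∧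
      S.orbit e m z j ∈ S.Ks (S.t (e (m + (j:ℕ)))) := by
  intro j
  induction j with
  | zero =>
    intro h
    have hx : x ∈ S.Ks (S.i (e m)) := first_mem S h
    simp only [Nat.cast_zero, add_zero]
    exact ⟨S.w_maps (e m) hx, S.w_maps (e m) hz⟩
  | succ j ih =>
    intro h
    have h1 : S.pathProb e m x j ≠ 0 := by
      intro h0; apply h; simp only [CMS.pathProb]; rw [h0, zero_mul]
    have h2 : S.p (e (m + (j:ℕ) + 1)) (S.orbit e m x j) ≠ 0 := by
      intro h0; apply h; simp only [CMS.pathProb]; rw [h0, mul_zero]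
    obtain ⟨hy, hzz⟩ := ih h1
    have hy2 : S.orbit e m x j ∈ S.Ks (S.i (e (m + (j:ℕ) + 1))) := by
      by_contra hc; exact h2 (S.p_zero _ _ hc)
    have hvv : S.i (e (m + (j:ℕ) + 1)) = S.t (e (m + (j:ℕ))) := by
      by_contra hne
      exact Set.disjoint_left.mp (S.Ks_disj _ _ hne) hy2 hy
    have hz2 : S.orbit e m z j ∈ S.Ks (S.i (e (m + (j:ℕ) + 1))) := hvv ▸ hzz
    have hcast : m + ((j+1:ℕ):ℤ) = m + (j:ℕ) + 1 := by push_cast; ring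
    simp only [CMS.orbit]
    rw [hcast]
    exact ⟨S.w_maps _ hy2, S.w_maps _ hz2⟩

end CMSlemmas


section RatioContract

variable {V : Type*}

lemma ratio (S : CMS E V K) (φ : E → ℝ → ℝ) (hφ0 : ∀ e t, 0 ≤ φ e t)
    (hmod : ∀ e, ∀ u ∈ S.Ks (S.i e), ∀ v ∈ S.Ks (S.i e), ∀ t : ℝ,
      dist u v ≤ t → |S.p e u - S.p e v| ≤ φ e t)
    (δ : ℝ) (hδ : 0 < δ) (hlow : ∀ e, ∀ u ∈ S.Ks (S.i e), δ ≤ S.p e u)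
    (b : ℝ) (e : ℤ → E) (m : ℤ) (x z : K)
    (hz : z ∈ S.Ks (S.i (e m))) (n : ℕ) :
    ∀ j : ℕ,
      (∀ k : ℕ, n ≤ k → k < j → dist (S.orbit e m x k) (S.orbit e m z k) ≤ b ^ k) →
      S.pathProb e m x j ≤
        δ⁻¹ ^ (min j n + 1) *
          Real.exp ((∑ k ∈ (Finset.range j).filter (fun k => n ≤ k), ∑ e', φ e' (b ^ k)) / δ) *
          S.pathProb e m z j := by
  intro j
  induction j with
  | zero =>
    intro _
    have h1 : S.p (e m) x ≤ δ⁻¹ * S.p (e m) z := by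
      calc S.p (e m) x ≤ 1 := p_le_one S _ _
        _ = δ⁻¹ * δ := (inv_mul_cancel₀ (ne_of_gt hδ)).symm
        _ ≤ δ⁻¹ * S.p (e m) z :=
            mul_le_mul_of_nonneg_left (hlow _ _ hz) (inv_nonneg.2 hδ.le)
    simpa [CMS.pathProb, Real.exp_zero] using h1
  | succ j ih =>
    intro hcond
    have IH := ih (fun k h1 h2 => hcond k h1 (by omega))
    set Sold := (∑ k ∈ (Finset.range j).filter (fun k => n ≤ k), ∑ e', φ e' (b ^ k)) with hSold
    set Cj := δ⁻¹ ^ (min j n + 1) * Real.exp (Sold / δ) with hCj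
    have hCj0 : (0:ℝ) ≤ Cj :=
      mul_nonneg (pow_nonneg (inv_nonneg.2 hδ.le) _) (Real.exp_nonneg _)
    have hpz0 : 0 ≤ S.pathProb e m z j := pathProb_nonneg S e m z j
    simp only [CMS.pathProb]
    set e' := e (m + (j:ℕ) + 1) with he'
    set y := S.orbit e m x j with hy'
    set zo := S.orbit e m z j with hzo'
    by_cases hdead : S.pathProb e m x j * S.p e' y = 0
    · rw [hdead]
      apply mul_nonneg (mul_nonneg (pow_nonneg (inv_nonneg.2 hδ.le) _) (Real.exp_nonneg _))
      exact mul_nonneg hpz0 (S.p_nonneg _ _)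
    · have hpx : S.pathProb e m x j ≠ 0 := fun h0 => hdead (by rw [h0, zero_mul])
      have hpy : S.p e' y ≠ 0 := fun h0 => hdead (by rw [h0, mul_zero])
      obtain ⟨hyt, hzt⟩ := alive S e m x z hz j hpx
      have hym : y ∈ S.Ks (S.i e') := by
        by_contra hc; exact hpy (S.p_zero _ _ hc)
      have hvv : S.i e' = S.t (e (m + (j:ℕ))) := by
        by_contra hne; exact Set.disjoint_left.mp (S.Ks_disj _ _ hne) hym hyt
      have hzm : zo ∈ S.Ks (S.i e') := hvv ▸ hzt
      have hpzlow : δ ≤ S.p e' zo := hlow _ _ hzm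
      rcases lt_or_ge j n with hjn | hjn
      · have hfac : S.p e' y ≤ δ⁻¹ * S.p e' zo := by
          calc S.p e' y ≤ 1 := p_le_one S _ _
            _ = δ⁻¹ * δ := (inv_mul_cancel₀ (ne_of_gt hδ)).symm
            _ ≤ δ⁻¹ * S.p e' zo :=
                mul_le_mul_of_nonneg_left hpzlow (inv_nonneg.2 hδ.le)
        have hmin : min (j+1) n + 1 = (min j n + 1) + 1 := by omega
        have hsum : (Finset.range (j+1)).filter (fun k => n ≤ k)
            = (Finset.range j).filter (fun k => n ≤ k) := by
          ext k; simp only [Finset.mem_filter, Finset.mem_range]; omega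
        rw [hmin, hsum, ← hSold, pow_succ]
        calc S.pathProb e m x j * S.p e' y
            ≤ (Cj * S.pathProb e m z j) * (δ⁻¹ * S.p e' zo) :=
              mul_le_mul IH hfac (S.p_nonneg _ _) (mul_nonneg hCj0 hpz0)
          _ = δ⁻¹ ^ (min j n + 1) * δ⁻¹ * Real.exp (Sold / δ) *
              (S.pathProb e m z j * S.p e' zo) := by rw [hCj]; ring
      · have hd : dist y zo ≤ b ^ j := hcond j hjn (by omega)
        have hφb : |S.p e' y - S.p e' zo| ≤ φ e' (b ^ j) := hmod e' y hym zo hzm _ hd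
        have hfac : S.p e' y ≤ S.p e' zo * Real.exp ((∑ e'', φ e'' (b ^ j)) / δ) := by
          have h1 : S.p e' y ≤ S.p e' zo + φ e' (b ^ j) := by
            have h := (abs_le.mp hφb).2; linarith
          have h2 : φ e' (b ^ j) ≤ (φ e' (b ^ j) / δ) * S.p e' zo := by
            rw [div_mul_eq_mul_div, le_div_iff₀ hδ]
            exact mul_le_mul_of_nonneg_left hpzlow (hφ0 _ _)
          have h3 : S.p e' y ≤ S.p e' zo * (1 + φ e' (b ^ j) / δ) := by
            have : S.p e' zo + (φ e' (b ^ j) / δ) * S.p e' zo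
                = S.p e' zo * (1 + φ e' (b ^ j) / δ) := by ring
            linarith
          have h4 : 1 + φ e' (b ^ j) / δ ≤ Real.exp ((∑ e'', φ e'' (b ^ j)) / δ) := by
            have h5 := Real.add_one_le_exp (φ e' (b ^ j) / δ)
            have h6 : φ e' (b ^ j) ≤ ∑ e'', φ e'' (b ^ j) :=
              Finset.single_le_sum (fun i _ => hφ0 i _) (Finset.mem_univ e')
            have h7 : φ e' (b ^ j) / δ ≤ (∑ e'', φ e'' (b ^ j)) / δ :=
              by gcongr
            calc 1 + φ e' (b ^ j) / δ ≤ Real.exp (φ e' (b ^ j) / δ) := by linarith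
              _ ≤ _ := Real.exp_le_exp.mpr h7
          calc S.p e' y ≤ S.p e' zo * (1 + φ e' (b ^ j) / δ) := h3
            _ ≤ _ := mul_le_mul_of_nonneg_left h4 (S.p_nonneg _ _)
        have hmin : min (j+1) n = min j n := by omega
        have hsum : (Finset.range (j+1)).filter (fun k => n ≤ k)
            = insert j ((Finset.range j).filter (fun k => n ≤ k)) := by
          ext k
          simp only [Finset.mem_insert, Finset.mem_filter, Finset.mem_range]
          omega
        have hjnot : j ∉ (Finset.range j).filter (fun k => n ≤ k) := by simp
        rw [hmin, hsum, Finset.sum_insert hjnot, ← hSold]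
        calc S.pathProb e m x j * S.p e' y
            ≤ (Cj * S.pathProb e m z j) *
              (S.p e' zo * Real.exp ((∑ e'', φ e'' (b ^ j)) / δ)) :=
              mul_le_mul IH hfac (S.p_nonneg _ _) (mul_nonneg hCj0 hpz0)
          _ = δ⁻¹ ^ (min j n + 1) *
              (Real.exp (Sold / δ) * Real.exp ((∑ e'', φ e'' (b ^ j)) / δ)) *
              (S.pathProb e m z j * S.p e' zo) := by rw [hCj]; ring
          _ = δ⁻¹ ^ (min j n + 1) *
              Real.exp (((∑ e'', φ e'' (b ^ j)) + Sold) / δ) *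
              (S.pathProb e m z j * S.p e' zo) := by
                rw [← Real.exp_add, ← add_div, add_comm (Sold) _]

lemma wx_snoc (m : ℤ) (j : ℕ) (w' : Fin (j+1) → E) (e0 : E) (k : ℕ) (hk : k ≤ j) :
    wx m (j+1) (Fin.snoc w' e0) (m + (k:ℕ)) = wx m j w' (m + (k:ℕ)) := by
  rw [wx_apply m (j+1) _ k (by omega) rfl, wx_apply m j _ k hk rfl]
  have hcast : (⟨k, by omega⟩ : Fin (j+2)) = Fin.castSucc ⟨k, Nat.lt_succ_of_le hk⟩ := rfl
  rw [hcast, Fin.snoc_castSucc]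

lemma wx_snoc_last (m : ℤ) (j : ℕ) (w' : Fin (j+1) → E) (e0 : E) :
    wx m (j+1) (Fin.snoc w' e0) (m + (j:ℕ) + 1) = e0 := by
  rw [wx_apply m (j+1) _ (j+1) (le_refl _) (by push_cast; ring)]
  have hcast : (⟨j+1, Nat.lt_succ_self _⟩ : Fin (j+2)) = Fin.last (j+1) := rfl
  rw [hcast, Fin.snoc_last]

lemma pathProb_snoc (S : CMS E V K) (m : ℤ) (j : ℕ) (w' : Fin (j+1) → E) (e0 : E) (x : K) :
    S.pathProb (wx m (j+1) (Fin.snoc w' e0)) m x (j+1)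
      = S.pathProb (wx m j w') m x j * S.p e0 (S.orbit (wx m j w') m x j) := by
  have hcong : ∀ k : ℕ, k ≤ j →
      wx m (j+1) (Fin.snoc w' e0) (m+(k:ℕ)) = wx m j w' (m+(k:ℕ)) :=
    fun k hk => wx_snoc m j w' e0 k hk
  simp only [CMS.pathProb]
  rw [pathProb_congr S m hcong x j (le_refl j), wx_snoc_last,
    orbit_congr S m hcong x j (le_refl j)]

lemma orbit_snoc (S : CMS E V K) (m : ℤ) (j : ℕ) (w' : Fin (j+1) → E) (e0 : E) (x : K) :
    S.orbit (wx m (j+1) (Fin.snoc w' e0)) m x (j+1)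
      = S.w e0 (S.orbit (wx m j w') m x j) := by
  have hcong : ∀ k : ℕ, k ≤ j →
      wx m (j+1) (Fin.snoc w' e0) (m+(k:ℕ)) = wx m j w' (m+(k:ℕ)) :=
    fun k hk => wx_snoc m j w' e0 k hk
  simp only [CMS.orbit]
  rw [wx_snoc_last, orbit_congr S m hcong x j (le_refl j)]

lemma contract (S : CMS E V K) (m : ℤ) (x z : K) (v0 : V)
    (hx : x ∈ S.Ks v0) (hz : z ∈ S.Ks v0) :
    ∀ j : ℕ, ∑ w : Fin (j+1) → E, S.pathProb (wx m j w) m x j *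
        dist (S.orbit (wx m j w) m x j) (S.orbit (wx m j w) m z j)
      ≤ S.a ^ (j+1) * dist x z := by
  intro j
  induction j with
  | zero =>
    have hre : ∀ w : Fin 1 → E, S.pathProb (wx m 0 w) m x 0 *
        dist (S.orbit (wx m 0 w) m x 0) (S.orbit (wx m 0 w) m z 0)
        = S.p (w 0) x * dist (S.w (w 0) x) (S.w (w 0) z) := by
      intro w
      have h0 : wx m 0 w m = w 0 := by
        have h := wx_apply m 0 w 0 (le_refl 0) (z := m) (by simp)
        simpa using h
      simp [CMS.pathProb, CMS.orbit, h0]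
    rw [Finset.sum_congr rfl (fun w _ => hre w)]
    rw [Fintype.sum_equiv (Equiv.funUnique (Fin 1) E)
      (fun w => S.p (w 0) x * dist (S.w (w 0) x) (S.w (w 0) z))
      (fun e0 => S.p e0 x * dist (S.w e0 x) (S.w e0 z)) (fun w => rfl)]
    rw [pow_one]
    exact S.contractive v0 x hx z hz
  | succ j ih =>
    classical
    set T : (Fin (j+2) → E) → ℝ := fun w =>
      S.pathProb (wx m (j+1) w) m x (j+1) *
        dist (S.orbit (wx m (j+1) w) m x (j+1)) (S.orbit (wx m (j+1) w) m z (j+1)) with hT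
    have h1 : ∑ w : Fin (j+2) → E, T w
        = ∑ p : E × (Fin (j+1) → E), T (Fin.snocEquiv (fun _ => E) p) :=
      (Equiv.sum_comp (Fin.snocEquiv (fun _ => E)) T).symm
    have h2 : ∀ (e0 : E) (w' : Fin (j+1) → E),
        T (Fin.snocEquiv (fun _ => E) (e0, w'))
        = S.pathProb (wx m j w') m x j *
            (S.p e0 (S.orbit (wx m j w') m x j) *
              dist (S.w e0 (S.orbit (wx m j w') m x j))
                   (S.w e0 (S.orbit (wx m j w') m z j))) := by
      intro e0 w'
      have hs : Fin.snocEquiv (fun _ : Fin (j+2) => E) (e0, w') = Fin.snoc w' e0 := rfl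
      rw [hT]
      simp only [hs]
      rw [pathProb_snoc, orbit_snoc, orbit_snoc]
      ring
    rw [h1, Fintype.sum_prod_type]
    have h3 : ∀ e0 : E, ∑ w' : Fin (j+1) → E, T (Fin.snocEquiv (fun _ => E) (e0, w'))
        = ∑ w' : Fin (j+1) → E, S.pathProb (wx m j w') m x j *
            (S.p e0 (S.orbit (wx m j w') m x j) *
              dist (S.w e0 (S.orbit (wx m j w') m x j))
                   (S.w e0 (S.orbit (wx m j w') m z j))) := by
      intro e0; exact Finset.sum_congr rfl (fun w' _ => h2 e0 w')
    rw [Finset.sum_congr rfl (fun e0 _ => h3 e0), Finset.sum_comm]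
    have h4 : ∀ w' : Fin (j+1) → E,
        ∑ e0 : E, S.pathProb (wx m j w') m x j *
            (S.p e0 (S.orbit (wx m j w') m x j) *
              dist (S.w e0 (S.orbit (wx m j w') m x j))
                   (S.w e0 (S.orbit (wx m j w') m z j)))
        ≤ S.pathProb (wx m j w') m x j *
            (S.a * dist (S.orbit (wx m j w') m x j) (S.orbit (wx m j w') m z j)) := by
      intro w'
      rw [← Finset.mul_sum]
      by_cases hw : S.pathProb (wx m j w') m x j = 0
      · rw [hw, zero_mul, zero_mul]
      · apply mul_le_mul_of_nonneg_left _ (pathProb_nonneg S _ m x j)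
        have hxm : x ∈ S.Ks (S.i (wx m j w' m)) := first_mem S hw
        have hv0 : S.i (wx m j w' m) = v0 := by
          by_contra hne
          exact Set.disjoint_left.mp (S.Ks_disj _ _ hne) hxm hx
        have hzm : z ∈ S.Ks (S.i (wx m j w' m)) := hv0 ▸ hz
        obtain ⟨hyt, hzt⟩ := alive S (wx m j w') m x z hzm j hw
        exact S.contractive _ _ hyt _ hzt
    calc ∑ w' : Fin (j+1) → E, ∑ e0 : E, S.pathProb (wx m j w') m x j *
            (S.p e0 (S.orbit (wx m j w') m x j) *
              dist (S.w e0 (S.orbit (wx m j w') m x j))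
                   (S.w e0 (S.orbit (wx m j w') m z j)))
        ≤ ∑ w' : Fin (j+1) → E, S.pathProb (wx m j w') m x j *
            (S.a * dist (S.orbit (wx m j w') m x j) (S.orbit (wx m j w') m z j)) :=
          Finset.sum_le_sum (fun w' _ => h4 w')
      _ = S.a * ∑ w' : Fin (j+1) → E, S.pathProb (wx m j w') m x j *
            dist (S.orbit (wx m j w') m x j) (S.orbit (wx m j w') m z j) := by
          rw [Finset.mul_sum]
          exact Finset.sum_congr rfl (fun w' _ => by ring)
      _ ≤ S.a * (S.a ^ (j+1) * dist x z) := mul_le_mul_of_nonneg_left ih S.ha0.le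
      _ = S.a ^ (j+1+1) * dist x z := by ring

end RatioContract


lemma dini_summable {g : ℝ → ℝ} (hmono : Monotone g) (h0 : ∀ t, 0 ≤ g t)
    {c : ℝ} (hc : 0 < c) (hint : MeasureTheory.IntegrableOn (fun t => g t / t) (Set.Ioc 0 c))
    {b : ℝ} (hb0 : 0 < b) (hb1 : b < 1) : Summable (fun k : ℕ => g (b ^ k)) := by
  obtain ⟨k0, hk0⟩ : ∃ k0 : ℕ, b ^ k0 < c := exists_pow_lt_of_lt_one hc hb1
  set I := ∫ t in Set.Ioc 0 c, g t / t with hI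
  have hpow_anti : ∀ {i j : ℕ}, i ≤ j → b ^ j ≤ b ^ i := fun hij =>
    pow_le_pow_of_le_one hb0.le hb1.le hij
  have hsub0 : ∀ (u v : ℕ), k0 ≤ v → Set.Ioc (b ^ u) (b ^ v) ⊆ Set.Ioc 0 c := by
    intro u v hv t ht
    exact ⟨lt_trans (pow_pos hb0 _) ht.1,
      le_trans ht.2 (le_trans (hpow_anti hv) hk0.le)⟩
  have key : ∀ n : ℕ, (∑ i ∈ Finset.range n, g (b ^ (k0 + i + 1))) * (1 - b) ≤ I := by
    intro n
    have hJ : ∀ nn : ℕ, (∑ i ∈ Finset.range nn, g (b ^ (k0 + i + 1))) * (1 - b)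
        ≤ ∫ t in Set.Ioc (b ^ (k0 + nn)) (b ^ k0), g t / t := by
      intro nn
      induction nn with
      | zero => simp
      | succ nn ih =>
        have hsplit : Set.Ioc (b ^ (k0 + (nn+1))) (b ^ k0)
            = Set.Ioc (b ^ (k0 + nn + 1)) (b ^ (k0 + nn)) ∪ Set.Ioc (b ^ (k0 + nn)) (b ^ k0) := by
          rw [Set.Ioc_union_Ioc_eq_Ioc (hpow_anti (by omega)) (hpow_anti (by omega))]
          norm_num [Nat.add_assoc]
        have hint1 : MeasureTheory.IntegrableOn (fun t => g t / t)
            (Set.Ioc (b ^ (k0 + nn + 1)) (b ^ (k0 + nn))) := hint.mono_set (hsub0 _ _ (by omega))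
        have hint2 : MeasureTheory.IntegrableOn (fun t => g t / t)
            (Set.Ioc (b ^ (k0 + nn)) (b ^ k0)) := hint.mono_set (hsub0 _ _ (by omega))
        have hdisj : Disjoint (Set.Ioc (b ^ (k0 + nn + 1)) (b ^ (k0 + nn)))
            (Set.Ioc (b ^ (k0 + nn)) (b ^ k0)) := by
          apply Set.disjoint_left.mpr
          intro t ht1 ht2
          exact absurd ht2.1 (not_lt.mpr ht1.2)
        have hunion := MeasureTheory.setIntegral_union hdisj measurableSet_Ioc hint1 hint2
            (f := fun t => g t / t) (μ := MeasureTheory.volume)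
        have hlow : g (b ^ (k0 + nn + 1)) * (1 - b)
            ≤ ∫ t in Set.Ioc (b ^ (k0 + nn + 1)) (b ^ (k0 + nn)), g t / t := by
          have hbK : (0:ℝ) < b ^ (k0 + nn) := pow_pos hb0 _
          have hconst := MeasureTheory.setIntegral_ge_of_const_le
            (μ := MeasureTheory.volume) (s := Set.Ioc (b ^ (k0 + nn + 1)) (b ^ (k0 + nn)))
            (c := g (b ^ (k0 + nn + 1)) / b ^ (k0 + nn))
            measurableSet_Ioc measure_Ioc_lt_top.ne
            (fun t ht => div_le_div₀ (h0 t) (hmono ht.1.le)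
              (lt_trans (pow_pos hb0 _) ht.1) ht.2) hint1
          have hvol : (MeasureTheory.volume.real (Set.Ioc (b ^ (k0 + nn + 1)) (b ^ (k0 + nn))))
              = b ^ (k0 + nn) - b ^ (k0 + nn + 1) := by
            rw [Measure.real, Real.volume_Ioc, ENNReal.toReal_ofReal (sub_nonneg.2 (hpow_anti (by omega)))]
          rw [hvol, smul_eq_mul, mul_comm (b ^ (k0 + nn) - b ^ (k0 + nn + 1))] at hconst
          have halg : g (b ^ (k0 + nn + 1)) / b ^ (k0 + nn) *
              (b ^ (k0 + nn) - b ^ (k0 + nn + 1)) = g (b ^ (k0 + nn + 1)) * (1 - b) := by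
            have hbK' : (b:ℝ) ^ (k0 + nn) ≠ 0 := ne_of_gt hbK
            field_simp
            ring
          rw [halg] at hconst
          exact hconst
        rw [show k0 + (nn + 1) = k0 + nn + 1 from rfl] at *
        calc (∑ i ∈ Finset.range (nn+1), g (b ^ (k0 + i + 1))) * (1 - b)
            = (∑ i ∈ Finset.range nn, g (b ^ (k0 + i + 1))) * (1 - b)
              + g (b ^ (k0 + nn + 1)) * (1 - b) := by
              rw [Finset.sum_range_succ]; ring
          _ ≤ (∫ t in Set.Ioc (b ^ (k0 + nn)) (b ^ k0), g t / t)
              + ∫ t in Set.Ioc (b ^ (k0 + nn + 1)) (b ^ (k0 + nn)), g t / t :=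
              add_le_add ih hlow
          _ = ∫ t in Set.Ioc (b ^ (k0 + nn + 1)) (b ^ k0), g t / t := by
              rw [hsplit, hunion]; ring
    have hle : (∫ t in Set.Ioc (b ^ (k0 + n)) (b ^ k0), g t / t) ≤ I := by
      apply MeasureTheory.setIntegral_mono_set hint
      · exact (MeasureTheory.ae_restrict_iff' measurableSet_Ioc).2
          (Filter.Eventually.of_forall (fun t ht => div_nonneg (h0 t) ht.1.le))
      · exact HasSubset.Subset.eventuallyLE (hsub0 _ _ le_rfl)
    exact le_trans (hJ n) hle
  have h1b : (0:ℝ) < 1 - b := by linarith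
  have hsum : ∀ n, ∑ i ∈ Finset.range n, g (b ^ (i + (k0+1))) ≤ I / (1 - b) := by
    intro n
    rw [le_div_iff₀ h1b]
    have hre : ∀ i : ℕ, g (b ^ (i + (k0+1))) = g (b ^ (k0 + i + 1)) := by
      intro i; rw [show i + (k0+1) = k0 + i + 1 from by omega]
    rw [Finset.sum_congr rfl (fun i _ => hre i)]
    exact key n
  have hs := summable_of_sum_range_le (fun n => h0 _) hsum
  exact (summable_nat_add_iff (k0+1)).1 hs

lemma Wset_empty (m : ℤ) : Wset m 0 (∅ : Finset (Fin 1 → E)) = (∅ : Set (ℤ → E)) := by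
  ext σ; simp [mem_Wset]

lemma Wset_biUnion_rep (m : ℤ) (n0 : ℕ) (jj : ℕ → ℕ)
    (FF : ∀ i, Finset (Fin (jj i + 1) → E)) :
    ∃ (j : ℕ) (F : Finset (Fin (j + 1) → E)),
      (⋃ i ∈ Finset.range n0, Wset m (jj i) (FF i)) = Wset m j F := by
  induction n0 with
  | zero =>
    refine ⟨0, ∅, ?_⟩
    simp [Wset_empty]
  | succ n ih =>
    obtain ⟨j, F, hF⟩ := ih
    obtain ⟨F1, hF1⟩ := Wset_lift m j F (max j (jj n)) (le_max_left _ _)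
    obtain ⟨F2, hF2⟩ := Wset_lift m (jj n) (FF n) (max j (jj n)) (le_max_right _ _)
    refine ⟨max j (jj n), F2 ∪ F1, ?_⟩
    rw [Finset.range_add_one, Finset.set_biUnion_insert, hF, hF1, hF2, Wset_union]

lemma approx (m : ℤ) (ρ : @Measure (ℤ → E) (Am E m)) (hfin : ρ Set.univ ≠ ⊤) :
    ∀ B : Set (ℤ → E), MeasurableSet[Am E m] B → ∀ ε : ℝ≥0∞, 0 < ε →
      ∃ (j : ℕ) (F : Finset (Fin (j + 1) → E)),
        ρ ((B \ Wset m j F) ∪ (Wset m j F \ B)) ≤ ε := by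
  letI := Am E m
  have hρfin : ∀ s : Set (ℤ → E), ρ s ≠ ⊤ :=
    fun s => ne_top_of_le_ne_top hfin (measure_mono (Set.subset_univ s))
  intro B hB
  refine MeasurableSpace.induction_on_inter
    (C := fun B _ => ∀ ε : ℝ≥0∞, 0 < ε → ∃ (j : ℕ) (F : Finset (Fin (j + 1) → E)),
      ρ ((B \ Wset m j F) ∪ (Wset m j F \ B)) ≤ ε)
    (Am_eq_generateFrom m) (isPiSystem_Cyls m) ?_ ?_ ?_ ?_ _ hB
  · intro ε hε
    refine ⟨0, ∅, ?_⟩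
    rw [Wset_empty]
    simp
  · rintro t ⟨j, e, rfl⟩
    intro ε hε
    refine ⟨j, {word m j e}, ?_⟩
    have h1 : Wset m j {word m j e} = cyl m j e := by
      rw [cyl_eq_wx_word m j e]
      ext σ
      simp [mem_Wset, mem_cyl_wx]
    rw [h1]
    simp
  · intro t htm hC
    intro ε hε
    obtain ⟨j, F, hF⟩ := hC ε hε
    refine ⟨j, Finset.univ \ F, ?_⟩
    rw [← Wset_compl]
    have hs : (tᶜ \ (Wset m j F)ᶜ) ∪ ((Wset m j F)ᶜ \ tᶜ)
        = (t \ Wset m j F) ∪ (Wset m j F \ t) := by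
      ext σ
      simp only [Set.mem_union, Set.mem_diff, Set.mem_compl_iff]
      tauto
    rw [hs]
    exact hF
  · intro f hdisj hmeas hC
    intro ε hε
    have hne : (∑' i, ρ (f i)) ≠ ⊤ := by
      rw [← measure_iUnion hdisj hmeas]; exact hρfin _
    have htail := ENNReal.tendsto_sum_nat_add (fun i => ρ (f i)) hne
    have hhalf : (0:ℝ≥0∞) < ε / 2 := ENNReal.half_pos (ne_of_gt hε)
    obtain ⟨n0, hn0⟩ := (htail.eventually_lt_const hhalf).exists
    have hWi : ∀ i : ℕ, ∃ jF : (Σ j : ℕ, Finset (Fin (j+1) → E)),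
        ρ ((f i \ Wset m jF.1 jF.2) ∪ (Wset m jF.1 jF.2 \ f i)) ≤ ε / 2 ^ (i+2) := by
      intro i
      have hpos : (0:ℝ≥0∞) < ε / 2 ^ (i+2) :=
        ENNReal.div_pos (ne_of_gt hε) (by
          exact ENNReal.pow_ne_top ENNReal.ofNat_ne_top)
      obtain ⟨j, F, h⟩ := hC i (ε / 2 ^ (i+2)) hpos
      exact ⟨⟨j, F⟩, h⟩
    choose jF hjF using hWi
    obtain ⟨j, F, hFrep⟩ := Wset_biUnion_rep m n0 (fun i => (jF i).1) (fun i => (jF i).2)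
    refine ⟨j, F, ?_⟩
    rw [← hFrep]
    set W : Set (ℤ → E) := ⋃ i ∈ Finset.range n0, Wset m (jF i).1 (jF i).2 with hW
    have hsubset : ((⋃ i, f i) \ W) ∪ (W \ ⋃ i, f i)
        ⊆ (⋃ i ∈ Finset.range n0,
            ((f i \ Wset m (jF i).1 (jF i).2) ∪ (Wset m (jF i).1 (jF i).2 \ f i)))
          ∪ (⋃ k : ℕ, f (k + n0)) := by
      rintro σ (⟨hσ1, hσ2⟩ | ⟨hσ1, hσ2⟩)
      · obtain ⟨i, hi⟩ := Set.mem_iUnion.mp hσ1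
        rcases lt_or_ge i n0 with hlt | hge
        · left
          apply Set.mem_biUnion (Finset.mem_range.mpr hlt)
          left
          refine ⟨hi, fun hc => hσ2 ?_⟩
          exact Set.mem_biUnion (Finset.mem_range.mpr hlt) hc
        · right
          exact Set.mem_iUnion.mpr ⟨i - n0, by rwa [Nat.sub_add_cancel hge]⟩
      · obtain ⟨i, hi, hmem⟩ := Set.mem_iUnion₂.mp hσ1
        left
        apply Set.mem_biUnion hi
        right
        exact ⟨hmem, fun hc => hσ2 (Set.mem_iUnion.mpr ⟨i, hc⟩)⟩
    have hgeo : ∑ i ∈ Finset.range n0, ε / 2 ^ (i + 2) ≤ ε / 2 := by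
      have h1 : ∀ i : ℕ, ε / 2 ^ (i+2) = (ε / 2) * 2⁻¹ ^ (i+1) := by
        intro i
        rw [show (2:ℝ≥0∞)^(i+2) = 2 * 2^(i+1) from pow_succ' 2 (i+1), div_eq_mul_inv,
          ENNReal.mul_inv (Or.inl two_ne_zero) (Or.inl ENNReal.ofNat_ne_top),
          ← ENNReal.inv_pow, div_eq_mul_inv]
        ring
      calc ∑ i ∈ Finset.range n0, ε / 2 ^ (i+2)
          = ∑ i ∈ Finset.range n0, (ε/2) * 2⁻¹ ^ (i+1) :=
            Finset.sum_congr rfl (fun i _ => h1 i)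
        _ = (ε/2) * ∑ i ∈ Finset.range n0, 2⁻¹ ^ (i+1) := by
            rw [Finset.mul_sum]
        _ ≤ (ε/2) * ∑' i : ℕ, 2⁻¹ ^ (i+1) :=
            mul_le_mul_right (ENNReal.sum_le_tsum _) _
        _ = (ε/2) * (2⁻¹ * (1 - 2⁻¹)⁻¹) := by rw [ENNReal.tsum_geometric_add_one]
        _ = ε/2 := by
            rw [ENNReal.one_sub_inv_two, inv_inv,
              ENNReal.inv_mul_cancel two_ne_zero ENNReal.ofNat_ne_top, mul_one]
    calc ρ (((⋃ i, f i) \ W) ∪ (W \ ⋃ i, f i))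
        ≤ ρ ((⋃ i ∈ Finset.range n0,
            ((f i \ Wset m (jF i).1 (jF i).2) ∪ (Wset m (jF i).1 (jF i).2 \ f i)))
          ∪ (⋃ k : ℕ, f (k + n0))) := measure_mono hsubset
      _ ≤ ρ (⋃ i ∈ Finset.range n0,
            ((f i \ Wset m (jF i).1 (jF i).2) ∪ (Wset m (jF i).1 (jF i).2 \ f i)))
          + ρ (⋃ k : ℕ, f (k + n0)) := measure_union_le _ _
      _ ≤ (∑ i ∈ Finset.range n0,
            ρ ((f i \ Wset m (jF i).1 (jF i).2) ∪ (Wset m (jF i).1 (jF i).2 \ f i)))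
          + ∑' k : ℕ, ρ (f (k + n0)) :=
          add_le_add (measure_biUnion_finset_le _ _) (measure_iUnion_le _)
      _ ≤ (∑ i ∈ Finset.range n0, ε / 2 ^ (i+2)) + ε / 2 :=
          add_le_add (Finset.sum_le_sum (fun i _ => hjF i)) hn0.le
      _ ≤ ε / 2 + ε / 2 := add_le_add_left hgeo _
      _ = ε := ENNReal.add_halves ε

end S9

end Helpers

open S9 in
/-- if each `p_e|_{K_{i(e)}}` is Dini-continuous and bounded below by `δ > 0`,
then `P^m_x ≪ P^m_{x_1…x_N}` for every `x ∈ K` and `m ≤ 0`. -/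
theorem statement9 {E V K : Type*} [Fintype E] [Fintype V] [MetricSpace K] [CompleteSpace K]
    [MeasurableSpace K] [BorelSpace K] (S : CMS E V K)
    (P : ∀ m : ℤ, K → @Measure (ℤ → E) (Am E m)) (hP : IsKernel S P)
    (φ : E → ℝ → ℝ) (hφmono : ∀ e, Monotone (φ e)) (hφ0 : ∀ e t, 0 ≤ φ e t)
    (hmod : ∀ e, ∀ u ∈ S.Ks (S.i e), ∀ v ∈ S.Ks (S.i e), ∀ t : ℝ,
      dist u v ≤ t → |S.p e u - S.p e v| ≤ φ e t)
    (hdini : ∀ e, ∃ c > (0 : ℝ), MeasureTheory.IntegrableOn (fun t => φ e t / t) (Set.Ioc 0 c))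
    (δ : ℝ) (hδ : 0 < δ) (hlow : ∀ e, ∀ u ∈ S.Ks (S.i e), δ ≤ S.p e u)
    (xs : V → K) (hxs : ∀ v, xs v ∈ S.Ks v) (x : K) :
    ∀ m : ℤ, m ≤ 0 → ∀ A : Set (ℤ → E), MeasurableSet[Am E m] A →
      PmMix P xs m A = 0 → P m x A = 0 := by
  classical
  intro m _hm A hA hA0
  letI := Am E m
  have hprob : ∀ x' : K, IsProbabilityMeasure (P m x') := fun x' => hP.1 m x'
  obtain ⟨v0, hv0⟩ := S.Ks_cover x
  set z := xs v0 with hzdef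
  have hzK : z ∈ S.Ks v0 := hxs v0
  have hE : Nonempty E := by
    by_contra hE
    rw [not_nonempty_iff] at hE
    have h1 := S.p_sum x
    simp [Finset.univ_eq_empty] at h1
  have hδ1 : δ ≤ 1 := by
    obtain ⟨e0⟩ := hE
    obtain ⟨u, hu⟩ := S.Ks_nonempty (S.i e0)
    exact le_trans (hlow e0 u hu) (S9.p_le_one S e0 u)
  have ha0 := S.ha0
  have ha1 := S.ha1
  set b : ℝ := (S.a + 1) / 2 with hbdef
  have hb0 : 0 < b := by rw [hbdef]; linarith
  have hab : S.a < b := by rw [hbdef]; linarith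
  have hb1 : b < 1 := by rw [hbdef]; linarith
  clear_value b
  -- Dini summability
  have hΦsum : Summable (fun k : ℕ => ∑ e', φ e' (b ^ k)) := by
    apply summable_sum
    intro e' _
    obtain ⟨c, hc, hint⟩ := hdini e'
    exact S9.dini_summable (hφmono e') (hφ0 e') hc hint hb0 hb1
  set T : ℝ := ∑' k : ℕ, ∑ e', φ e' (b ^ k) with hTdef
  set Cn : ℕ → ℝ := fun n => δ⁻¹ ^ (n + 1) * Real.exp (T / δ) with hCndef
  have hCn0 : ∀ n, 0 ≤ Cn n := fun n =>
    mul_nonneg (pow_nonneg (inv_nonneg.2 hδ.le) _) (Real.exp_nonneg _)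
  -- measures
  set μ := P m x with hμdef
  set lam : @Measure (ℤ → E) (Am E m) := ∑ v : V, P m (xs v) with hlamdef
  have hlam_apply : ∀ s : Set (ℤ → E), lam s = ∑ v : V, P m (xs v) s := by
    intro s
    rw [hlamdef]
    exact Measure.finset_sum_apply _ _ _
  have hlamA : lam A = 0 := by
    have h1 : PmMix P xs m A = ((Fintype.card V : ℝ≥0∞))⁻¹ * lam A := by
      rw [PmMix, Measure.smul_apply, smul_eq_mul, hlamdef]
    rw [hA0] at h1
    rcases mul_eq_zero.mp h1.symm with h | h
    · exact absurd h (ENNReal.inv_ne_zero.2 (ENNReal.natCast_ne_top _))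
    · exact h
  set D : ℝ := dist x z with hDdef
  have hD0 : 0 ≤ D := dist_nonneg
  -- bad sets
  set Bad : ℕ → Set (ℤ → E) := fun k =>
    {σ | b ^ k < dist (S.orbit σ m x k) (S.orbit σ m z k)} with hBaddef
  set Gn : ℕ → Set (ℤ → E) := fun n => ⋂ k : ℕ, (Bad (n + k))ᶜ with hGndef
  -- congruence of orbits on cylinders
  have horbcyl : ∀ (j k : ℕ) (w : Fin (j+1) → E) (σ : ℤ → E), k ≤ j →
      σ ∈ cyl m j (wx m j w) →
      (S.orbit σ m x k = S.orbit (wx m j w) m x k ∧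
       S.orbit σ m z k = S.orbit (wx m j w) m z k) := by
    intro j k w σ hkj hσ
    have hcong : ∀ kk : ℕ, kk ≤ k → σ (m + (kk:ℕ)) = wx m j w (m + (kk:ℕ)) :=
      fun kk hkk => hσ (m + (kk:ℕ)) (by omega) (by omega)
    exact ⟨S9.orbit_congr S m hcong x k le_rfl, S9.orbit_congr S m hcong z k le_rfl⟩
  -- Step A : measure of bad sets
  have hBadμ : ∀ k : ℕ, μ (Bad k) ≤ ENNReal.ofReal (S.a * D * (S.a / b) ^ k) := by
    intro k
    set BadF : Finset (Fin (k+1) → E) := Finset.univ.filter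
      (fun w => b ^ k < dist (S.orbit (wx m k w) m x k) (S.orbit (wx m k w) m z k))
      with hBadF
    have hsub : Bad k ⊆ ⋃ w ∈ BadF, cyl m k (wx m k w) := by
      intro σ hσ
      have hmem := S9.mem_cyl_wx_self m k σ
      have hcong := horbcyl k k (S9.word m k σ) σ le_rfl hmem
      refine Set.mem_iUnion₂.mpr ⟨S9.word m k σ, ?_, hmem⟩
      rw [hBadF, Finset.mem_filter]
      refine ⟨Finset.mem_univ _, ?_⟩
      rw [← hcong.1, ← hcong.2]
      exact hσ
    have hbk : (0:ℝ) < b ^ k := pow_pos hb0 k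
    have hreal : ∑ w ∈ BadF, S.pathProb (wx m k w) m x k ≤ S.a * D * (S.a / b) ^ k := by
      have hterm : ∀ w ∈ BadF, S.pathProb (wx m k w) m x k
          ≤ (b ^ k)⁻¹ * (S.pathProb (wx m k w) m x k *
              dist (S.orbit (wx m k w) m x k) (S.orbit (wx m k w) m z k)) := by
        intro w hw
        rw [hBadF, Finset.mem_filter] at hw
        have hPnn := S9.pathProb_nonneg S (wx m k w) m x k
        have h2 : S.pathProb (wx m k w) m x k * b ^ k
            ≤ S.pathProb (wx m k w) m x k *
              dist (S.orbit (wx m k w) m x k) (S.orbit (wx m k w) m z k) :=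
          mul_le_mul_of_nonneg_left hw.2.le hPnn
        calc S.pathProb (wx m k w) m x k
            = (S.pathProb (wx m k w) m x k * b ^ k) * (b ^ k)⁻¹ := by field_simp
          _ ≤ (S.pathProb (wx m k w) m x k *
              dist (S.orbit (wx m k w) m x k) (S.orbit (wx m k w) m z k)) * (b ^ k)⁻¹ :=
              mul_le_mul_of_nonneg_right h2 (inv_nonneg.2 hbk.le)
          _ = (b ^ k)⁻¹ * _ := mul_comm _ _
      have hsum2 : ∑ w ∈ BadF, (b ^ k)⁻¹ * (S.pathProb (wx m k w) m x k *
              dist (S.orbit (wx m k w) m x k) (S.orbit (wx m k w) m z k))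
          ≤ (b ^ k)⁻¹ * (S.a ^ (k+1) * D) := by
        rw [← Finset.mul_sum]
        apply mul_le_mul_of_nonneg_left _ (inv_nonneg.2 hbk.le)
        calc ∑ w ∈ BadF, S.pathProb (wx m k w) m x k *
              dist (S.orbit (wx m k w) m x k) (S.orbit (wx m k w) m z k)
            ≤ ∑ w : Fin (k+1) → E, S.pathProb (wx m k w) m x k *
              dist (S.orbit (wx m k w) m x k) (S.orbit (wx m k w) m z k) :=
              Finset.sum_le_sum_of_subset_of_nonneg (Finset.subset_univ _)
                (fun w _ _ => mul_nonneg (S9.pathProb_nonneg S _ m x k) dist_nonneg)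
          _ ≤ S.a ^ (k+1) * dist x z := S9.contract S m x z v0 hv0 hzK k
          _ = S.a ^ (k+1) * D := rfl
      have halg : (b ^ k)⁻¹ * (S.a ^ (k+1) * D) = S.a * D * (S.a / b) ^ k := by
        rw [div_pow]
        field_simp
        ring
      calc ∑ w ∈ BadF, S.pathProb (wx m k w) m x k
          ≤ ∑ w ∈ BadF, (b ^ k)⁻¹ * (S.pathProb (wx m k w) m x k *
              dist (S.orbit (wx m k w) m x k) (S.orbit (wx m k w) m z k)) :=
            Finset.sum_le_sum hterm
        _ ≤ (b ^ k)⁻¹ * (S.a ^ (k+1) * D) := hsum2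
        _ = S.a * D * (S.a / b) ^ k := halg
    calc μ (Bad k) ≤ μ (⋃ w ∈ BadF, cyl m k (wx m k w)) := measure_mono hsub
      _ ≤ ∑ w ∈ BadF, μ (cyl m k (wx m k w)) := measure_biUnion_finset_le _ _
      _ = ∑ w ∈ BadF, ENNReal.ofReal (S.pathProb (wx m k w) m x k) := by
          exact Finset.sum_congr rfl (fun w _ => hP.2 m x (wx m k w) k)
      _ = ENNReal.ofReal (∑ w ∈ BadF, S.pathProb (wx m k w) m x k) :=
          (ENNReal.ofReal_sum_of_nonneg (fun w _ => S9.pathProb_nonneg S _ m x k)).symm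
      _ ≤ ENNReal.ofReal (S.a * D * (S.a / b) ^ k) := ENNReal.ofReal_le_ofReal hreal
  -- Step B : tail bound
  set rr : ℝ≥0∞ := ENNReal.ofReal (S.a / b) with hrrdef
  have hrr1 : rr < 1 := by
    rw [hrrdef]
    exact ENNReal.ofReal_lt_one.2 ((div_lt_one hb0).2 hab)
  set c1 : ℝ≥0∞ := ENNReal.ofReal (S.a * D) * (1 - rr)⁻¹ with hc1def
  have hc1top : c1 ≠ ⊤ := by
    apply ENNReal.mul_ne_top ENNReal.ofReal_ne_top
    rw [Ne, ENNReal.inv_eq_top]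
    intro hctr
    rw [tsub_eq_zero_iff_le] at hctr
    exact absurd hrr1 (not_lt.mpr hctr)
  have hGtail : ∀ n : ℕ, μ ((Gn n)ᶜ) ≤ c1 * rr ^ n := by
    intro n
    have hcompl : (Gn n)ᶜ = ⋃ k : ℕ, Bad (n + k) := by
      rw [hGndef]
      simp [Set.compl_iInter]
    rw [hcompl]
    calc μ (⋃ k : ℕ, Bad (n + k)) ≤ ∑' k : ℕ, μ (Bad (n + k)) := measure_iUnion_le _
      _ ≤ ∑' k : ℕ, ENNReal.ofReal (S.a * D) * rr ^ (n + k) := by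
          apply ENNReal.tsum_le_tsum
          intro k
          refine le_trans (hBadμ (n + k)) (le_of_eq ?_)
          rw [ENNReal.ofReal_mul (mul_nonneg ha0.le hD0), hrrdef,
            ← ENNReal.ofReal_pow (div_nonneg ha0.le hb0.le)]
      _ = ENNReal.ofReal (S.a * D) * ∑' k : ℕ, rr ^ (n + k) := ENNReal.tsum_mul_left
      _ = ENNReal.ofReal (S.a * D) * (rr ^ n * ∑' k : ℕ, rr ^ k) := by
          congr 1
          rw [← ENNReal.tsum_mul_left]
          exact tsum_congr (fun k => pow_add rr n k)
      _ = c1 * rr ^ n := by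
          rw [hc1def, ENNReal.tsum_geometric]
          ring
  -- Step C : per-cylinder bound
  have hcylG : ∀ (n j : ℕ) (w : Fin (j+1) → E),
      μ (cyl m j (wx m j w) ∩ Gn n) ≤ ENNReal.ofReal (Cn n) * lam (cyl m j (wx m j w)) := by
    intro n j w
    by_cases hbad : ∃ k : ℕ, n ≤ k ∧ k ≤ j ∧
        b ^ k < dist (S.orbit (wx m j w) m x k) (S.orbit (wx m j w) m z k)
    · obtain ⟨k, hk1, hk2, hk3⟩ := hbad
      have hempty : cyl m j (wx m j w) ∩ Gn n = ∅ := by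
        rw [Set.eq_empty_iff_forall_notMem]
        rintro σ ⟨hσc, hσG⟩
        have hcong := horbcyl j k w σ hk2 hσc
        have hmem : σ ∈ (Bad (n + (k - n)))ᶜ := by
          rw [hGndef] at hσG
          exact Set.mem_iInter.mp hσG (k - n)
        rw [show n + (k - n) = k from by omega] at hmem
        apply hmem
        rw [hBaddef]
        show b ^ k < dist (S.orbit σ m x k) (S.orbit σ m z k)
        rw [hcong.1, hcong.2]
        exact hk3
      rw [hempty]
      simp
    · push_neg at hbad
      by_cases hiv : S.i (wx m j w m) = v0
      · have hx' : x ∈ S.Ks (S.i (wx m j w m)) := by rw [hiv]; exact hv0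
        have hz' : z ∈ S.Ks (S.i (wx m j w m)) := by rw [hiv]; exact hzK
        have hrat := S9.ratio S φ hφ0 hmod δ hδ hlow b (wx m j w) m x z hz' n j
          (fun k h1 h2 => hbad k h1 (by omega))
        have h1δ : (1:ℝ) ≤ δ⁻¹ := by
          rw [← inv_one]
          exact inv_anti₀ hδ hδ1
        have hcoef : δ⁻¹ ^ (min j n + 1) *
            Real.exp ((∑ k ∈ (Finset.range j).filter (fun k => n ≤ k),
              ∑ e', φ e' (b ^ k)) / δ) ≤ Cn n := by
          rw [hCndef]
          apply mul_le_mul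
          · exact pow_le_pow_right₀ h1δ (by omega)
          · apply Real.exp_le_exp.mpr
            gcongr
            exact Summable.sum_le_tsum _ (fun k _ => Finset.sum_nonneg (fun e' _ => hφ0 e' _)) hΦsum
          · exact Real.exp_nonneg _
          · exact pow_nonneg (le_trans zero_le_one h1δ) _
        have hpath : S.pathProb (wx m j w) m x j ≤ Cn n * S.pathProb (wx m j w) m z j := by
          refine le_trans hrat ?_
          exact mul_le_mul_of_nonneg_right hcoef (S9.pathProb_nonneg S _ m z j)
        calc μ (cyl m j (wx m j w) ∩ Gn n) ≤ μ (cyl m j (wx m j w)) :=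
              measure_mono Set.inter_subset_left
          _ = ENNReal.ofReal (S.pathProb (wx m j w) m x j) := hP.2 m x _ j
          _ ≤ ENNReal.ofReal (Cn n * S.pathProb (wx m j w) m z j) :=
              ENNReal.ofReal_le_ofReal hpath
          _ = ENNReal.ofReal (Cn n) * ENNReal.ofReal (S.pathProb (wx m j w) m z j) :=
              ENNReal.ofReal_mul (hCn0 n)
          _ = ENNReal.ofReal (Cn n) * P m z (cyl m j (wx m j w)) := by
              rw [hP.2 m z _ j]
          _ ≤ ENNReal.ofReal (Cn n) * lam (cyl m j (wx m j w)) := by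
              apply mul_le_mul_right
              rw [hlam_apply]
              rw [hzdef]
              exact Finset.single_le_sum (f := fun v => P m (xs v) (cyl m j (wx m j w)))
                (fun v _ => zero_le) (Finset.mem_univ v0)
      · have hxnot : x ∉ S.Ks (S.i (wx m j w m)) := by
          intro hc
          apply hiv
          by_contra hne
          exact Set.disjoint_left.mp (S.Ks_disj _ _ hne) hc hv0
        have hzero : S.pathProb (wx m j w) m x j = 0 :=
          S9.pathProb_zero_first S _ m x (S.p_zero _ _ hxnot) j
        calc μ (cyl m j (wx m j w) ∩ Gn n) ≤ μ (cyl m j (wx m j w)) :=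
              measure_mono Set.inter_subset_left
          _ = ENNReal.ofReal (S.pathProb (wx m j w) m x j) := hP.2 m x _ j
          _ = 0 := by rw [hzero]; simp
          _ ≤ _ := zero_le
  -- Step D : μ (A ∩ Gn n) = 0
  have hAGn : ∀ n : ℕ, μ (A ∩ Gn n) = 0 := by
    intro n
    set ρ : @Measure (ℤ → E) (Am E m) := μ + lam with hρdef
    have hρ_apply : ∀ s : Set (ℤ → E), ρ s = μ s + lam s := by
      intro s; rw [hρdef]; rfl
    have hρfin : ρ Set.univ ≠ ⊤ := by
      rw [hρ_apply, hlam_apply]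
      have h1 : μ Set.univ = 1 := (hprob x).measure_univ
      have h2 : ∀ v : V, P m (xs v) Set.univ = 1 := fun v => (hprob (xs v)).measure_univ
      rw [h1, Finset.sum_congr rfl (fun v _ => h2 v), Finset.sum_const, nsmul_eq_mul, mul_one]
      exact ENNReal.add_ne_top.2 ⟨ENNReal.one_ne_top, ENNReal.natCast_ne_top _⟩
    have hμleρ : ∀ s : Set (ℤ → E), μ s ≤ ρ s := fun s => by
      rw [hρ_apply]; exact le_self_add
    have hlamleρ : ∀ s : Set (ℤ → E), lam s ≤ ρ s := fun s => by
      rw [hρ_apply]; exact le_add_self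
    have key : ∀ ε : ℝ≥0∞, 0 < ε →
        μ (A ∩ Gn n) ≤ (ENNReal.ofReal (Cn n) + 1) * ε := by
      intro ε hε
      obtain ⟨j, F, hF⟩ := S9.approx m ρ hρfin A hA ε hε
      set W := S9.Wset m j F with hWdef
      have h1 : μ (A ∩ Gn n) ≤ μ (W ∩ Gn n) + μ (A \ W) := by
        refine le_trans (measure_mono ?_) (measure_union_le _ _)
        rintro σ ⟨hσA, hσG⟩
        by_cases hσW : σ ∈ W
        · exact Or.inl ⟨hσW, hσG⟩
        · exact Or.inr ⟨hσA, hσW⟩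
      have h2 : μ (A \ W) ≤ ε :=
        le_trans (hμleρ _) (le_trans (measure_mono Set.subset_union_left) hF)
      have h3 : μ (W ∩ Gn n) ≤ ENNReal.ofReal (Cn n) * lam W := by
        have hWG : W ∩ Gn n = ⋃ w ∈ F, (cyl m j (S9.wx m j w) ∩ Gn n) := by
          rw [hWdef, S9.Wset_eq_biUnion]
          ext σ
          simp only [Set.mem_inter_iff, Set.mem_iUnion]
          tauto
        have hlamW : lam W = ∑ w ∈ F, lam (cyl m j (S9.wx m j w)) := by
          rw [hWdef, S9.Wset_eq_biUnion]
          exact measure_biUnion_finset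
            (fun w _ w' _ hne => S9.cyl_wx_disj m j hne)
            (fun w _ => S9.measurableSet_cyl m j _)
        calc μ (W ∩ Gn n) = μ (⋃ w ∈ F, (cyl m j (S9.wx m j w) ∩ Gn n)) := by rw [hWG]
          _ ≤ ∑ w ∈ F, μ (cyl m j (S9.wx m j w) ∩ Gn n) := measure_biUnion_finset_le _ _
          _ ≤ ∑ w ∈ F, ENNReal.ofReal (Cn n) * lam (cyl m j (S9.wx m j w)) :=
              Finset.sum_le_sum (fun w _ => hcylG n j w)
          _ = ENNReal.ofReal (Cn n) * ∑ w ∈ F, lam (cyl m j (S9.wx m j w)) := by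
              rw [Finset.mul_sum]
          _ = ENNReal.ofReal (Cn n) * lam W := by rw [hlamW]
      have h4 : lam W ≤ ε := by
        have h5 : lam W ≤ lam A + lam (W \ A) := by
          refine le_trans (measure_mono ?_) (measure_union_le _ _)
          intro σ hσ
          by_cases hσA : σ ∈ A
          · exact Or.inl hσA
          · exact Or.inr ⟨hσ, hσA⟩
        rw [hlamA, zero_add] at h5
        exact le_trans h5 (le_trans (hlamleρ _)
          (le_trans (measure_mono Set.subset_union_right) hF))
      calc μ (A ∩ Gn n) ≤ μ (W ∩ Gn n) + μ (A \ W) := h1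
        _ ≤ ENNReal.ofReal (Cn n) * lam W + ε := add_le_add h3 h2
        _ ≤ ENNReal.ofReal (Cn n) * ε + ε :=
            add_le_add_left (mul_le_mul_right h4 _) ε
        _ = (ENNReal.ofReal (Cn n) + 1) * ε := by rw [add_mul, one_mul]
    by_contra hne0
    set t := μ (A ∩ Gn n) with htdef
    set c : ℝ≥0∞ := ENNReal.ofReal (Cn n) + 1 with hcdef
    have hc0 : c ≠ 0 :=
      ne_of_gt (lt_of_lt_of_le zero_lt_one le_add_self)
    have hcT : c ≠ ⊤ := by
      rw [hcdef]
      exact ENNReal.add_ne_top.2 ⟨ENNReal.ofReal_ne_top, ENNReal.one_ne_top⟩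
    have htfin : t ≠ ⊤ := by
      rw [htdef]
      refine ne_top_of_le_ne_top ?_ (measure_mono (Set.subset_univ _))
      rw [(hprob x).measure_univ]
      exact ENNReal.one_ne_top
    have hεpos : 0 < t / (2 * c) :=
      ENNReal.div_pos hne0 (ENNReal.mul_ne_top ENNReal.ofNat_ne_top hcT)
    have hkey := key _ hεpos
    have heq : c * (t / (2 * c)) = t / 2 := by
      rw [div_eq_mul_inv, ENNReal.mul_inv (Or.inl two_ne_zero) (Or.inl ENNReal.ofNat_ne_top)]
      calc c * (t * (2⁻¹ * c⁻¹)) = (c * c⁻¹) * (t * 2⁻¹) := by ring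
        _ = t * 2⁻¹ := by rw [ENNReal.mul_inv_cancel hc0 hcT, one_mul]
        _ = t / 2 := by rw [div_eq_mul_inv]
    rw [heq] at hkey
    exact absurd hkey (not_le.mpr (ENNReal.half_lt_self hne0 htfin))
  -- Step E : conclusion
  have hfinal : ∀ n : ℕ, μ A ≤ c1 * rr ^ n := by
    intro n
    calc μ A ≤ μ ((A ∩ Gn n) ∪ (A \ Gn n)) := by
          apply measure_mono
          intro σ hσ
          by_cases h : σ ∈ Gn n
          · exact Or.inl ⟨hσ, h⟩
          · exact Or.inr ⟨hσ, h⟩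
      _ ≤ μ (A ∩ Gn n) + μ (A \ Gn n) := measure_union_le _ _
      _ = μ (A \ Gn n) := by rw [hAGn n, zero_add]
      _ ≤ μ ((Gn n)ᶜ) := measure_mono (fun σ hσ => hσ.2)
      _ ≤ c1 * rr ^ n := hGtail n
  have htend : Tendsto (fun n : ℕ => c1 * rr ^ n) atTop (nhds 0) := by
    have h1 := ENNReal.tendsto_pow_atTop_nhds_zero_of_lt_one hrr1
    have h2 := ENNReal.Tendsto.const_mul h1 (Or.inr hc1top)
    simpa using h2
  have : μ A ≤ 0 := ge_of_tendsto' htend hfinal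
  exact le_antisymm this zero_le
end

section
/- Suppose each p_e|_{K_{i(e)}} is Dini-continuous and bounded below by δ > 0. Then for every Borel probability measure ν on K and for all choices x_i, y_i ∈ K_i: (i) F_{x_1...x_N} is defined Φ(ν)-almost everywhere; (ii) F_{x_1...x_N} = F_{y_1...y_N} Φ(ν)-almost everywhere. -/
open MeasureTheory ENNReal Filter

variable {E V K : Type*} [Fintype E] [MetricSpace K] [MeasurableSpace K]

set_option linter.unusedSectionVars false
set_option linter.unusedTactic false

/- ====================  auxiliary infrastructure  ==================== -/

/-- shift of a one-sided pattern. -/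
def shiftP (q : ℕ → E) : ℕ → E := fun n => q (n + 1)

/-- prepend a letter to a one-sided pattern. -/
def prep (e : E) (q : ℕ → E) : ℕ → E := fun n => match n with
  | 0 => e
  | Nat.succ k => q k

@[simp] lemma prep_zero (e : E) (q : ℕ → E) : prep e q 0 = e := rfl
@[simp] lemma prep_succ (e : E) (q : ℕ → E) (k : ℕ) : prep e q (k + 1) = q k := rfl
@[simp] lemma shiftP_prep (e : E) (q : ℕ → E) : shiftP (prep e q) = q := rfl

lemma shiftP_iter (s : ℕ) (q : ℕ → E) (k : ℕ) : (shiftP^[s] q) k = q (k + s) := by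
  induction s generalizing q k with
  | zero => rfl
  | succ s ih =>
      rw [Function.iterate_succ_apply, ih]
      simp [shiftP, Nat.add_assoc]

lemma shiftP_iter_prep (s : ℕ) (e : E) (q : ℕ → E) :
    shiftP^[s+1] (prep e q) = shiftP^[s] q := by
  rw [Function.iterate_succ_apply, shiftP_prep]

namespace CMS
variable (S : CMS E V K)

/-- orbit along a one-sided pattern: `OBn j x q = w_{q (j-1)} ∘ ⋯ ∘ w_{q 0} (x)`. -/
def OBn : ℕ → K → (ℕ → E) → K
  | 0, x, _ => x
  | (j+1), x, q => OBn j (S.w (q 0) x) (shiftP q)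

/-- probability of a one-sided pattern. -/
def PPn : ℕ → K → (ℕ → E) → ℝ
  | 0, _, _ => 1
  | (j+1), x, q => S.p (q 0) x * PPn j (S.w (q 0) x) (shiftP q)

/-- expectation functional over patterns of length `j`. -/
noncomputable def EXn (e₀ : E) : ℕ → K → ((ℕ → E) → ℝ) → ℝ
  | 0, _, F => F (fun _ => e₀)
  | (j+1), x, F => ∑ e : E, S.p e x * EXn e₀ j (S.w e x) (fun q => F (prep e q))

@[simp] lemma OBn_zero (x : K) (q : ℕ → E) : S.OBn 0 x q = x := rfl
lemma OBn_succ (j : ℕ) (x : K) (q : ℕ → E) :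
    S.OBn (j+1) x q = S.OBn j (S.w (q 0) x) (shiftP q) := rfl
@[simp] lemma OBn_prep (j : ℕ) (x : K) (e : E) (q : ℕ → E) :
    S.OBn (j+1) x (prep e q) = S.OBn j (S.w e x) q := rfl
@[simp] lemma PPn_zero (x : K) (q : ℕ → E) : S.PPn 0 x q = 1 := rfl
lemma PPn_succ (j : ℕ) (x : K) (q : ℕ → E) :
    S.PPn (j+1) x q = S.p (q 0) x * S.PPn j (S.w (q 0) x) (shiftP q) := rfl
@[simp] lemma PPn_prep (j : ℕ) (x : K) (e : E) (q : ℕ → E) :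
    S.PPn (j+1) x (prep e q) = S.p e x * S.PPn j (S.w e x) q := rfl
lemma EXn_zero' (e₀ : E) (x : K) (F : (ℕ → E) → ℝ) :
    S.EXn e₀ 0 x F = F (fun _ => e₀) := rfl
lemma EXn_succ (e₀ : E) (j : ℕ) (x : K) (F : (ℕ → E) → ℝ) :
    S.EXn e₀ (j+1) x F = ∑ e : E, S.p e x * S.EXn e₀ j (S.w e x) (fun q => F (prep e q)) := rfl

lemma PPn_nonneg (j : ℕ) (x : K) (q : ℕ → E) : 0 ≤ S.PPn j x q := by
  induction j generalizing x q with
  | zero => norm_num [PPn]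
  | succ j ih => exact mul_nonneg (S.p_nonneg _ _) (ih _ _)

lemma EXn_mono (e₀ : E) (j : ℕ) (x : K) {F G : (ℕ → E) → ℝ} (h : ∀ q, F q ≤ G q) :
    S.EXn e₀ j x F ≤ S.EXn e₀ j x G := by
  induction j generalizing x F G with
  | zero => exact h _
  | succ j ih =>
      rw [EXn_succ, EXn_succ]
      refine Finset.sum_le_sum fun e _ => ?_
      exact mul_le_mul_of_nonneg_left (ih _ fun q => h _) (S.p_nonneg _ _)

lemma EXn_add (e₀ : E) (j : ℕ) (x : K) (F G : (ℕ → E) → ℝ) :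
    S.EXn e₀ j x (fun q => F q + G q) = S.EXn e₀ j x F + S.EXn e₀ j x G := by
  induction j generalizing x F G with
  | zero => rfl
  | succ j ih =>
      rw [EXn_succ, EXn_succ, EXn_succ, ← Finset.sum_add_distrib]
      refine Finset.sum_congr rfl fun e _ => ?_
      rw [ih]; ring

lemma EXn_smul (e₀ : E) (j : ℕ) (x : K) (r : ℝ) (F : (ℕ → E) → ℝ) :
    S.EXn e₀ j x (fun q => r * F q) = r * S.EXn e₀ j x F := by
  induction j generalizing x F with
  | zero => rfl
  | succ j ih =>
      rw [EXn_succ, EXn_succ, Finset.mul_sum]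
      refine Finset.sum_congr rfl fun e _ => ?_
      rw [ih]; ring

lemma EXn_const (e₀ : E) (j : ℕ) (x : K) (r : ℝ) :
    S.EXn e₀ j x (fun _ => r) = r := by
  induction j generalizing x with
  | zero => rfl
  | succ j ih =>
      rw [EXn_succ]
      simp only [ih]
      rw [← Finset.sum_mul, S.p_sum, one_mul]

lemma EXn_nonneg (e₀ : E) (j : ℕ) (x : K) {F : (ℕ → E) → ℝ} (h : ∀ q, 0 ≤ F q) :
    0 ≤ S.EXn e₀ j x F := by
  have := S.EXn_mono e₀ j x (F := fun _ => (0:ℝ)) (G := F) h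
  rwa [EXn_const] at this

end CMS

namespace CMS
variable {E V K : Type*} [Fintype E] [MetricSpace K] [MeasurableSpace K] (S : CMS E V K)
set_option linter.unusedSectionVars false

lemma orbit_front (σ : ℤ → E) (m : ℤ) (x : K) (j : ℕ) :
    S.orbit σ m x (j+1) = S.orbit σ (m+1) (S.w (σ m) x) j := by
  induction j with
  | zero =>
      show S.w (σ (m + 0 + 1)) (S.orbit σ m x 0) = S.w (σ (m+1)) (S.w (σ m) x)
      norm_num [CMS.orbit]
  | succ j ih =>
      show S.w (σ (m + (j+1) + 1)) (S.orbit σ m x (j+1)) = _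
      rw [ih]
      show _ = S.w (σ (m + 1 + j + 1)) (S.orbit σ (m+1) (S.w (σ m) x) j)
      congr 2
      ring

lemma pathProb_front (σ : ℤ → E) (m : ℤ) (x : K) (j : ℕ) :
    S.pathProb σ m x (j+1) = S.p (σ m) x * S.pathProb σ (m+1) (S.w (σ m) x) j := by
  induction j with
  | zero =>
      show S.pathProb σ m x 0 * S.p (σ (m + 0 + 1)) (S.orbit σ m x 0) = _
      norm_num [CMS.pathProb, CMS.orbit]
  | succ j ih =>
      show S.pathProb σ m x (j+1) * S.p (σ (m + (j+1) + 1)) (S.orbit σ m x (j+1)) = _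
      rw [ih, orbit_front]
      show _ = S.p (σ m) x * (S.pathProb σ (m+1) (S.w (σ m) x) j *
        S.p (σ (m + 1 + j + 1)) (S.orbit σ (m+1) (S.w (σ m) x) j))
      have : m + (j+1) + 1 = m + 1 + j + 1 := by ring
      rw [this]; ring

lemma orbit_OBn (σ : ℤ → E) (m : ℤ) (x : K) (j : ℕ) :
    S.orbit σ m x j = S.OBn (j+1) x (fun k : ℕ => σ (m + k)) := by
  induction j generalizing m x with
  | zero =>
      show S.w (σ m) x = _
      rw [OBn_succ]
      norm_num
  | succ j ih =>
      rw [orbit_front, ih]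
      conv_rhs => rw [OBn_succ]
      congr 1
      · norm_num
      · funext k; simp only [shiftP]; congr 1; push_cast; ring

lemma pathProb_PPn (σ : ℤ → E) (m : ℤ) (x : K) (j : ℕ) :
    S.pathProb σ m x j = S.PPn (j+1) x (fun k : ℕ => σ (m + k)) := by
  induction j generalizing m x with
  | zero =>
      show S.p (σ m) x = _
      rw [PPn_succ]
      norm_num
  | succ j ih =>
      rw [pathProb_front, ih]
      conv_rhs => rw [PPn_succ]
      congr 1
      · norm_num
      · congr 1
        · norm_num
        · funext k; simp only [shiftP]; congr 1; push_cast; ring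

lemma OBn_congr (j : ℕ) (x : K) (q q' : ℕ → E) (h : ∀ k < j, q k = q' k) :
    S.OBn j x q = S.OBn j x q' := by
  induction j generalizing x q q' with
  | zero => rfl
  | succ j ih =>
      rw [OBn_succ, OBn_succ, h 0 (Nat.succ_pos _)]
      exact ih _ _ _ fun k hk => h (k+1) (by omega)

/-- common vertex from the disjointness. -/
lemma vertex_eq {x : K} {v v' : V} (hv : x ∈ S.Ks v) (hv' : x ∈ S.Ks v') : v = v' := by
  by_contra h
  exact (S.Ks_disj v v' h).ne_of_mem hv hv' rfl

/-- a vertex for each point. -/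
noncomputable def vert (x : K) : V := (S.Ks_cover x).choose

lemma mem_vert (x : K) : x ∈ S.Ks (S.vert x) := (S.Ks_cover x).choose_spec

/-- The fundamental matched-base contraction estimate. -/
lemma EXn_contract (e₀ : E) (j : ℕ) :
    ∀ (v : V) (x u : K), x ∈ S.Ks v → u ∈ S.Ks v →
    S.EXn e₀ j x (fun q => dist (S.OBn j x q) (S.OBn j u q)) ≤ S.a ^ j * dist x u := by
  induction j with
  | zero =>
      intro v x u _ _
      simp [EXn_zero']
  | succ j ih =>
      intro v x u hx hu
      rw [EXn_succ]
      have step : ∀ e : E,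
          S.p e x * S.EXn e₀ j (S.w e x)
            (fun q => dist (S.OBn (j+1) x (prep e q)) (S.OBn (j+1) u (prep e q)))
          ≤ S.p e x * (S.a ^ j * dist (S.w e x) (S.w e u)) := by
        intro e
        by_cases hxe : x ∈ S.Ks (S.i e)
        · have hv : v = S.i e := S.vertex_eq hx hxe
          have hue : u ∈ S.Ks (S.i e) := hv ▸ hu
          refine mul_le_mul_of_nonneg_left ?_ (S.p_nonneg _ _)
          have h1 : S.w e x ∈ S.Ks (S.t e) := S.w_maps e hxe
          have h2 : S.w e u ∈ S.Ks (S.t e) := S.w_maps e hue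
          have := ih (S.t e) (S.w e x) (S.w e u) h1 h2
          simpa using this
        · rw [S.p_zero e x hxe, zero_mul, zero_mul]
      calc ∑ e : E, S.p e x * S.EXn e₀ j (S.w e x)
            (fun q => dist (S.OBn (j+1) x (prep e q)) (S.OBn (j+1) u (prep e q)))
          ≤ ∑ e : E, S.p e x * (S.a ^ j * dist (S.w e x) (S.w e u)) :=
            Finset.sum_le_sum fun e _ => step e
        _ = S.a ^ j * ∑ e : E, S.p e x * dist (S.w e x) (S.w e u) := by
            rw [Finset.mul_sum]; exact Finset.sum_congr rfl fun e _ => by ring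
        _ ≤ S.a ^ j * (S.a * dist x u) := by
            refine mul_le_mul_of_nonneg_left ?_ (pow_nonneg S.ha0.le _)
            exact S.contractive v x hx u hu
        _ = S.a ^ (j+1) * dist x u := by ring

end CMS

namespace CMS
variable {E V K : Type*} [Fintype E] [Fintype V] [MetricSpace K] [MeasurableSpace K] (S : CMS E V K)
set_option linter.unusedSectionVars false

/-- master constant: all pairwise distances in the finite configuration. -/
noncomputable def CZ (xs ys : V → K) : ℝ :=
  ∑ z : E × V × V,
    (dist (S.w z.1 (xs z.2.1)) (xs z.2.2) + dist (S.w z.1 (ys z.2.1)) (ys z.2.2)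
     + dist (S.w z.1 (xs z.2.1)) (S.w z.1 (xs z.2.2))
     + dist (S.w z.1 (ys z.2.1)) (S.w z.1 (ys z.2.2)))

variable (xs ys : V → K)

lemma CZ_nonneg : 0 ≤ S.CZ xs ys := by
  refine Finset.sum_nonneg fun z _ => ?_
  positivity

lemma le_CZ_term (e : E) (v v' : V) (r : ℝ)
    (hr : r ≤ dist (S.w e (xs v)) (xs v') ∨ r ≤ dist (S.w e (ys v)) (ys v')
        ∨ r ≤ dist (S.w e (xs v)) (S.w e (xs v'))
        ∨ r ≤ dist (S.w e (ys v)) (S.w e (ys v'))) :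
    r ≤ S.CZ xs ys := by
  have hterm : (dist (S.w e (xs v)) (xs v') + dist (S.w e (ys v)) (ys v')
     + dist (S.w e (xs v)) (S.w e (xs v'))
     + dist (S.w e (ys v)) (S.w e (ys v'))) ≤ S.CZ xs ys := by
    refine Finset.single_le_sum (f := fun z : E × V × V =>
      (dist (S.w z.1 (xs z.2.1)) (xs z.2.2) + dist (S.w z.1 (ys z.2.1)) (ys z.2.2)
       + dist (S.w z.1 (xs z.2.1)) (S.w z.1 (xs z.2.2))
       + dist (S.w z.1 (ys z.2.1)) (S.w z.1 (ys z.2.2)))) (fun z _ => by positivity)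
      (Finset.mem_univ (e, v, v'))
  have d1 := dist_nonneg (x := S.w e (xs v)) (y := xs v')
  have d2 := dist_nonneg (x := S.w e (ys v)) (y := ys v')
  have d3 := dist_nonneg (x := S.w e (xs v)) (y := S.w e (xs v'))
  have d4 := dist_nonneg (x := S.w e (ys v)) (y := S.w e (ys v'))
  rcases hr with h|h|h|h <;> linarith

/-- distance to the chosen base point. -/
noncomputable def gg (x : K) : ℝ := dist x (xs (S.vert x))
noncomputable def gy' (x : K) : ℝ := dist x (ys (S.vert x))

lemma gg_nonneg (x : K) : 0 ≤ S.gg xs x := dist_nonneg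
lemma gy'_nonneg (x : K) : 0 ≤ S.gy' ys x := dist_nonneg

/-- generic weighted bound. -/
lemma weighted_le (x y : K) (hy : y ∈ S.Ks (S.vert x)) (f : E → ℝ) (C : ℝ)
    (hf : ∀ e, f e ≤ dist (S.w e x) (S.w e y) + C) :
    ∑ e, S.p e x * f e ≤ S.a * dist x y + C := by
  calc ∑ e, S.p e x * f e
      ≤ ∑ e, S.p e x * (dist (S.w e x) (S.w e y) + C) :=
        Finset.sum_le_sum fun e _ => mul_le_mul_of_nonneg_left (hf e) (S.p_nonneg e x)
    _ = (∑ e, S.p e x * dist (S.w e x) (S.w e y)) + (∑ e, S.p e x) * C := by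
        rw [Finset.sum_mul, ← Finset.sum_add_distrib]
        exact Finset.sum_congr rfl fun e _ => by ring
    _ ≤ S.a * dist x y + C := by
        rw [S.p_sum, one_mul]
        have := S.contractive (S.vert x) x (S.mem_vert x) y hy
        linarith

variable (hxs : ∀ v, xs v ∈ S.Ks v) (hys : ∀ v, ys v ∈ S.Ks v)
include hxs

lemma SAx (x : K) :
    ∑ e, S.p e x * dist (S.w e x) (S.w e (xs (S.i e))) ≤ S.a * S.gg xs x + S.CZ xs ys := by
  refine S.weighted_le x (xs (S.vert x)) (hxs _) _ _ fun e => ?_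
  have h3 : dist (S.w e (xs (S.vert x))) (S.w e (xs (S.i e))) ≤ S.CZ xs ys :=
    S.le_CZ_term xs ys e (S.vert x) (S.i e) _ (Or.inr (Or.inr (Or.inl le_rfl)))
  calc dist (S.w e x) (S.w e (xs (S.i e)))
      ≤ dist (S.w e x) (S.w e (xs (S.vert x))) + dist (S.w e (xs (S.vert x))) (S.w e (xs (S.i e))) :=
        dist_triangle _ _ _
    _ ≤ dist (S.w e x) (S.w e (xs (S.vert x))) + S.CZ xs ys := by linarith

lemma gdrift (x : K) :
    ∑ e, S.p e x * S.gg xs (S.w e x) ≤ S.a * S.gg xs x + S.CZ xs ys := by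
  refine S.weighted_le x (xs (S.vert x)) (hxs _) _ _ fun e => ?_
  have h1 : dist (S.w e (xs (S.vert x))) (xs (S.vert (S.w e x))) ≤ S.CZ xs ys :=
    S.le_CZ_term xs ys e (S.vert x) (S.vert (S.w e x)) _ (Or.inl le_rfl)
  calc S.gg xs (S.w e x)
      ≤ dist (S.w e x) (S.w e (xs (S.vert x))) + dist (S.w e (xs (S.vert x))) (xs (S.vert (S.w e x))) :=
        dist_triangle _ _ _
    _ ≤ dist (S.w e x) (S.w e (xs (S.vert x))) + S.CZ xs ys := by linarith

omit hxs
include hys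

lemma SAy (x : K) :
    ∑ e, S.p e x * dist (S.w e x) (S.w e (ys (S.i e))) ≤ S.a * S.gy' ys x + S.CZ xs ys := by
  refine S.weighted_le x (ys (S.vert x)) (hys _) _ _ fun e => ?_
  have h4 : dist (S.w e (ys (S.vert x))) (S.w e (ys (S.i e))) ≤ S.CZ xs ys :=
    S.le_CZ_term xs ys e (S.vert x) (S.i e) _ (Or.inr (Or.inr (Or.inr le_rfl)))
  calc dist (S.w e x) (S.w e (ys (S.i e)))
      ≤ dist (S.w e x) (S.w e (ys (S.vert x))) + dist (S.w e (ys (S.vert x))) (S.w e (ys (S.i e))) :=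
        dist_triangle _ _ _
    _ ≤ dist (S.w e x) (S.w e (ys (S.vert x))) + S.CZ xs ys := by linarith

lemma gydrift (x : K) :
    ∑ e, S.p e x * S.gy' ys (S.w e x) ≤ S.a * S.gy' ys x + S.CZ xs ys := by
  refine S.weighted_le x (ys (S.vert x)) (hys _) _ _ fun e => ?_
  have h2 : dist (S.w e (ys (S.vert x))) (ys (S.vert (S.w e x))) ≤ S.CZ xs ys :=
    S.le_CZ_term xs ys e (S.vert x) (S.vert (S.w e x)) _ (Or.inr (Or.inl le_rfl))
  calc S.gy' ys (S.w e x)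
      ≤ dist (S.w e x) (S.w e (ys (S.vert x))) + dist (S.w e (ys (S.vert x))) (ys (S.vert (S.w e x))) :=
        dist_triangle _ _ _
    _ ≤ dist (S.w e x) (S.w e (ys (S.vert x))) + S.CZ xs ys := by linarith

omit hys
end CMS

namespace CMS
variable {E V K : Type*} [Fintype E] [Fintype V] [MetricSpace K] [MeasurableSpace K] (S : CMS E V K)
set_option linter.unusedSectionVars false
set_option maxHeartbeats 1000000

variable (xs ys : V → K)

/-- the scale-`n` window function. -/
noncomputable def Phl (n : ℕ) (q : ℕ → E) : ℝ :=
  dist (S.OBn (n+1) (xs (S.i (q 1))) (shiftP q)) (S.OBn (n+2) (xs (S.i (q 0))) q)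
  + dist (S.OBn (n+1) (ys (S.i (q 1))) (shiftP q)) (S.OBn (n+2) (ys (S.i (q 0))) q)
  + dist (S.OBn (n+1) (xs (S.i (q 1))) (shiftP q)) (S.OBn (n+1) (ys (S.i (q 1))) (shiftP q))

lemma Phl_nonneg (n : ℕ) (q : ℕ → E) : 0 ≤ S.Phl xs ys n q := by
  unfold Phl; positivity

lemma geo_le (s : ℕ) : ∑ i ∈ Finset.range s, S.a ^ i ≤ (1 - S.a)⁻¹ := by
  have h := geom_sum_mul S.a s
  have h1 : 0 < 1 - S.a := by linarith [S.ha1]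
  rw [inv_eq_one_div, le_div_iff₀ h1]
  nlinarith [pow_nonneg S.ha0.le s]

variable (hxs : ∀ v, xs v ∈ S.Ks v) (hys : ∀ v, ys v ∈ S.Ks v)

include hxs in
lemma EXn_betax (e₀ : E) (n : ℕ) (z : K) :
    S.EXn e₀ (n+1) z (fun q => dist (S.OBn (n+1) (xs (S.i (q 0))) q) (S.OBn (n+1) z q))
      ≤ S.a ^ n * (S.a * S.gg xs z + S.CZ xs ys) := by
  rw [EXn_succ]
  have step : ∀ e' : E,
      S.p e' z * S.EXn e₀ n (S.w e' z)
        (fun q => dist (S.OBn (n+1) (xs (S.i ((prep e' q) 0))) (prep e' q))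
                       (S.OBn (n+1) z (prep e' q)))
      ≤ S.p e' z * (S.a ^ n * dist (S.w e' z) (S.w e' (xs (S.i e')))) := by
    intro e'
    by_cases hz : z ∈ S.Ks (S.i e')
    · refine mul_le_mul_of_nonneg_left ?_ (S.p_nonneg _ _)
      have hint : (fun q => dist (S.OBn (n+1) (xs (S.i ((prep e' q) 0))) (prep e' q))
                       (S.OBn (n+1) z (prep e' q)))
          = fun q => dist (S.OBn n (S.w e' z) q) (S.OBn n (S.w e' (xs (S.i e'))) q) := by
        funext q
        rw [prep_zero, OBn_prep, OBn_prep, dist_comm]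
      rw [hint]
      exact S.EXn_contract e₀ n (S.t e') (S.w e' z) (S.w e' (xs (S.i e')))
        (S.w_maps e' hz) (S.w_maps e' (hxs (S.i e')))
    · rw [S.p_zero e' z hz, zero_mul, zero_mul]
  calc (∑ e' : E, _) ≤ ∑ e' : E, S.p e' z * (S.a ^ n * dist (S.w e' z) (S.w e' (xs (S.i e')))) :=
        Finset.sum_le_sum fun e' _ => step e'
    _ = S.a ^ n * ∑ e' : E, S.p e' z * dist (S.w e' z) (S.w e' (xs (S.i e'))) := by
        rw [Finset.mul_sum]; exact Finset.sum_congr rfl fun e' _ => by ring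
    _ ≤ S.a ^ n * (S.a * S.gg xs z + S.CZ xs ys) := by
        refine mul_le_mul_of_nonneg_left ?_ (pow_nonneg S.ha0.le _)
        exact S.SAx xs ys hxs z

include hys in
lemma EXn_betay (e₀ : E) (n : ℕ) (z : K) :
    S.EXn e₀ (n+1) z (fun q => dist (S.OBn (n+1) (ys (S.i (q 0))) q) (S.OBn (n+1) z q))
      ≤ S.a ^ n * (S.a * S.gy' ys z + S.CZ xs ys) := by
  rw [EXn_succ]
  have step : ∀ e' : E,
      S.p e' z * S.EXn e₀ n (S.w e' z)
        (fun q => dist (S.OBn (n+1) (ys (S.i ((prep e' q) 0))) (prep e' q))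
                       (S.OBn (n+1) z (prep e' q)))
      ≤ S.p e' z * (S.a ^ n * dist (S.w e' z) (S.w e' (ys (S.i e')))) := by
    intro e'
    by_cases hz : z ∈ S.Ks (S.i e')
    · refine mul_le_mul_of_nonneg_left ?_ (S.p_nonneg _ _)
      have hint : (fun q => dist (S.OBn (n+1) (ys (S.i ((prep e' q) 0))) (prep e' q))
                       (S.OBn (n+1) z (prep e' q)))
          = fun q => dist (S.OBn n (S.w e' z) q) (S.OBn n (S.w e' (ys (S.i e'))) q) := by
        funext q
        rw [prep_zero, OBn_prep, OBn_prep, dist_comm]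
      rw [hint]
      exact S.EXn_contract e₀ n (S.t e') (S.w e' z) (S.w e' (ys (S.i e')))
        (S.w_maps e' hz) (S.w_maps e' (hys (S.i e')))
    · rw [S.p_zero e' z hz, zero_mul, zero_mul]
  calc (∑ e' : E, _) ≤ ∑ e' : E, S.p e' z * (S.a ^ n * dist (S.w e' z) (S.w e' (ys (S.i e')))) :=
        Finset.sum_le_sum fun e' _ => step e'
    _ = S.a ^ n * ∑ e' : E, S.p e' z * dist (S.w e' z) (S.w e' (ys (S.i e'))) := by
        rw [Finset.mul_sum]; exact Finset.sum_congr rfl fun e' _ => by ring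
    _ ≤ S.a ^ n * (S.a * S.gy' ys z + S.CZ xs ys) := by
        refine mul_le_mul_of_nonneg_left ?_ (pow_nonneg S.ha0.le _)
        exact S.SAy xs ys hys z

include hxs hys in
lemma EXn_core (e₀ : E) (n : ℕ) (x : K) :
    S.EXn e₀ (n+2) x (S.Phl xs ys n)
      ≤ S.a ^ n * ((10 * S.CZ xs ys + 3) * (1 + (S.gg xs x + S.gy' ys x))) := by
  have hC0 : 0 ≤ S.CZ xs ys := S.CZ_nonneg xs ys
  have ha0 : (0:ℝ) ≤ S.a := S.ha0.le
  have ha1 : S.a ≤ 1 := S.ha1.le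
  have han : (0:ℝ) ≤ S.a ^ n := pow_nonneg ha0 n
  rw [show n + 2 = (n+1)+1 from rfl, EXn_succ]
  have key : ∀ e : E, S.p e x * S.EXn e₀ (n+1) (S.w e x) (fun q => S.Phl xs ys n (prep e q))
      ≤ S.p e x * (2*(S.a^n*(S.a * S.gg xs (S.w e x) + S.CZ xs ys))
          + 2*(S.a^n*(S.a * S.gy' ys (S.w e x) + S.CZ xs ys))
          + S.a^(n+1) * dist (S.w e x) (S.w e (xs (S.i e)))
          + S.a^(n+1) * dist (S.w e x) (S.w e (ys (S.i e)))) := by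
    intro e
    by_cases hxe : x ∈ S.Ks (S.i e)
    · refine mul_le_mul_of_nonneg_left ?_ (S.p_nonneg _ _)
      have hpt : ∀ q : ℕ → E, S.Phl xs ys n (prep e q) ≤
          2 * dist (S.OBn (n+1) (xs (S.i (q 0))) q) (S.OBn (n+1) (S.w e x) q)
          + (2 * dist (S.OBn (n+1) (ys (S.i (q 0))) q) (S.OBn (n+1) (S.w e x) q)
          + (dist (S.OBn (n+1) (S.w e x) q) (S.OBn (n+1) (S.w e (xs (S.i e))) q)
          + dist (S.OBn (n+1) (S.w e x) q) (S.OBn (n+1) (S.w e (ys (S.i e))) q))) := by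
        intro q
        have hrw : S.Phl xs ys n (prep e q)
            = dist (S.OBn (n+1) (xs (S.i (q 0))) q) (S.OBn (n+1) (S.w e (xs (S.i e))) q)
            + dist (S.OBn (n+1) (ys (S.i (q 0))) q) (S.OBn (n+1) (S.w e (ys (S.i e))) q)
            + dist (S.OBn (n+1) (xs (S.i (q 0))) q) (S.OBn (n+1) (ys (S.i (q 0))) q) := by
          unfold Phl
          rw [prep_zero, prep_succ, shiftP_prep, OBn_prep, OBn_prep]
        rw [hrw]
        have t1 := dist_triangle (S.OBn (n+1) (xs (S.i (q 0))) q) (S.OBn (n+1) (S.w e x) q)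
          (S.OBn (n+1) (S.w e (xs (S.i e))) q)
        have t2 := dist_triangle (S.OBn (n+1) (ys (S.i (q 0))) q) (S.OBn (n+1) (S.w e x) q)
          (S.OBn (n+1) (S.w e (ys (S.i e))) q)
        have t3 := dist_triangle (S.OBn (n+1) (xs (S.i (q 0))) q) (S.OBn (n+1) (S.w e x) q)
          (S.OBn (n+1) (ys (S.i (q 0))) q)
        have c3 : dist (S.OBn (n+1) (S.w e x) q) (S.OBn (n+1) (ys (S.i (q 0))) q)
            = dist (S.OBn (n+1) (ys (S.i (q 0))) q) (S.OBn (n+1) (S.w e x) q) := dist_comm _ _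
        linarith
      have hmono := S.EXn_mono e₀ (n+1) (S.w e x) hpt
      have hsplit : S.EXn e₀ (n+1) (S.w e x) (fun q =>
          2 * dist (S.OBn (n+1) (xs (S.i (q 0))) q) (S.OBn (n+1) (S.w e x) q)
          + (2 * dist (S.OBn (n+1) (ys (S.i (q 0))) q) (S.OBn (n+1) (S.w e x) q)
          + (dist (S.OBn (n+1) (S.w e x) q) (S.OBn (n+1) (S.w e (xs (S.i e))) q)
          + dist (S.OBn (n+1) (S.w e x) q) (S.OBn (n+1) (S.w e (ys (S.i e))) q))))
          = 2 * S.EXn e₀ (n+1) (S.w e x) (fun q =>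
              dist (S.OBn (n+1) (xs (S.i (q 0))) q) (S.OBn (n+1) (S.w e x) q))
          + (2 * S.EXn e₀ (n+1) (S.w e x) (fun q =>
              dist (S.OBn (n+1) (ys (S.i (q 0))) q) (S.OBn (n+1) (S.w e x) q))
          + (S.EXn e₀ (n+1) (S.w e x) (fun q =>
              dist (S.OBn (n+1) (S.w e x) q) (S.OBn (n+1) (S.w e (xs (S.i e))) q))
          + S.EXn e₀ (n+1) (S.w e x) (fun q =>
              dist (S.OBn (n+1) (S.w e x) q) (S.OBn (n+1) (S.w e (ys (S.i e))) q)))) := by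
        rw [EXn_add, EXn_add, EXn_add, EXn_smul, EXn_smul]
      have b1 := S.EXn_betax xs ys hxs e₀ n (S.w e x)
      have b2 := S.EXn_betay xs ys hys e₀ n (S.w e x)
      have b3 : S.EXn e₀ (n+1) (S.w e x) (fun q =>
              dist (S.OBn (n+1) (S.w e x) q) (S.OBn (n+1) (S.w e (xs (S.i e))) q))
          ≤ S.a^(n+1) * dist (S.w e x) (S.w e (xs (S.i e))) :=
        S.EXn_contract e₀ (n+1) (S.t e) _ _ (S.w_maps e hxe) (S.w_maps e (hxs (S.i e)))
      have b4 : S.EXn e₀ (n+1) (S.w e x) (fun q =>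
              dist (S.OBn (n+1) (S.w e x) q) (S.OBn (n+1) (S.w e (ys (S.i e))) q))
          ≤ S.a^(n+1) * dist (S.w e x) (S.w e (ys (S.i e))) :=
        S.EXn_contract e₀ (n+1) (S.t e) _ _ (S.w_maps e hxe) (S.w_maps e (hys (S.i e)))
      rw [hsplit] at hmono
      linarith
    · rw [S.p_zero e x hxe, zero_mul, zero_mul]
  calc (∑ e : E, _)
      ≤ ∑ e : E, S.p e x * (2*(S.a^n*(S.a * S.gg xs (S.w e x) + S.CZ xs ys))
          + 2*(S.a^n*(S.a * S.gy' ys (S.w e x) + S.CZ xs ys))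
          + S.a^(n+1) * dist (S.w e x) (S.w e (xs (S.i e)))
          + S.a^(n+1) * dist (S.w e x) (S.w e (ys (S.i e)))) :=
        Finset.sum_le_sum fun e _ => key e
    _ = 2*S.a^(n+1)*(∑ e : E, S.p e x * S.gg xs (S.w e x))
        + 2*S.a^(n+1)*(∑ e : E, S.p e x * S.gy' ys (S.w e x))
        + 4*S.a^n*S.CZ xs ys*(∑ e : E, S.p e x)
        + S.a^(n+1)*(∑ e : E, S.p e x * dist (S.w e x) (S.w e (xs (S.i e))))
        + S.a^(n+1)*(∑ e : E, S.p e x * dist (S.w e x) (S.w e (ys (S.i e)))) := by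
        simp only [Finset.mul_sum, ← Finset.sum_add_distrib]
        refine Finset.sum_congr rfl fun e _ => ?_
        rw [pow_succ]; ring
    _ ≤ S.a ^ n * ((10 * S.CZ xs ys + 3) * (1 + (S.gg xs x + S.gy' ys x))) := by
        have h1 := S.gdrift xs ys hxs x
        have h2 := S.gydrift xs ys hys x
        have h3 := S.SAx xs ys hxs x
        have h4 := S.SAy xs ys hys x
        have hgg : 0 ≤ S.gg xs x := S.gg_nonneg xs x
        have hgy : 0 ≤ S.gy' ys x := S.gy'_nonneg ys x
        rw [S.p_sum, pow_succ]
        nlinarith [mul_le_mul_of_nonneg_left h1 (mul_nonneg han ha0),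
          mul_le_mul_of_nonneg_left h2 (mul_nonneg han ha0),
          mul_le_mul_of_nonneg_left h3 (mul_nonneg han ha0),
          mul_le_mul_of_nonneg_left h4 (mul_nonneg han ha0),
          mul_nonneg han hC0, mul_nonneg (mul_nonneg han ha0) hC0,
          mul_nonneg han hgg, mul_nonneg han hgy,
          mul_le_mul_of_nonneg_left ha1 (mul_nonneg han hgg),
          mul_le_mul_of_nonneg_left ha1 (mul_nonneg han hgy),
          mul_le_mul_of_nonneg_left ha1 (mul_nonneg (mul_nonneg han ha0) hgg),
          mul_le_mul_of_nonneg_left ha1 (mul_nonneg (mul_nonneg han ha0) hgy),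
          mul_le_mul_of_nonneg_left ha1 (mul_nonneg han hC0)]

end CMS

namespace CMS
variable {E V K : Type*} [Fintype E] [Fintype V] [MetricSpace K] [MeasurableSpace K] (S : CMS E V K)
set_option linter.unusedSectionVars false
set_option maxHeartbeats 1000000

variable (xs ys : V → K) (hxs : ∀ v, xs v ∈ S.Ks v) (hys : ∀ v, ys v ∈ S.Ks v)

include hxs hys in
lemma EXn_pad_aux (e₀ : E) (n : ℕ) : ∀ (s : ℕ) (x : K),
    S.EXn e₀ ((n+2)+s) x (fun q => S.Phl xs ys n (shiftP^[s] q))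
      ≤ S.a ^ n * ((10*S.CZ xs ys+3)
          + 2*S.CZ xs ys*(10*S.CZ xs ys+3)*(∑ i ∈ Finset.range s, S.a^i)
          + (10*S.CZ xs ys+3)*S.a^s*(S.gg xs x + S.gy' ys x)) := by
  intro s
  induction s with
  | zero =>
      intro x
      have hcore := S.EXn_core xs ys hxs hys e₀ n x
      have heq : (fun q => S.Phl xs ys n (shiftP^[0] q)) = S.Phl xs ys n := by
        funext q; rw [Function.iterate_zero_apply]
      rw [Nat.add_zero, heq]
      calc S.EXn e₀ (n+2) x (S.Phl xs ys n)
          ≤ S.a ^ n * ((10 * S.CZ xs ys + 3) * (1 + (S.gg xs x + S.gy' ys x))) := hcore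
        _ = S.a ^ n * ((10*S.CZ xs ys+3)
            + 2*S.CZ xs ys*(10*S.CZ xs ys+3)*(∑ i ∈ Finset.range 0, S.a^i)
            + (10*S.CZ xs ys+3)*S.a^0*(S.gg xs x + S.gy' ys x)) := by
            rw [Finset.range_zero, Finset.sum_empty, pow_zero]; ring
  | succ s ih =>
      intro x
      have hC0 : 0 ≤ S.CZ xs ys := S.CZ_nonneg xs ys
      have han : (0:ℝ) ≤ S.a ^ n := pow_nonneg S.ha0.le n
      have has : (0:ℝ) ≤ S.a ^ s := pow_nonneg S.ha0.le s
      rw [show (n+2)+(s+1) = ((n+2)+s)+1 from rfl, EXn_succ]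
      have key : ∀ e : E,
          S.p e x * S.EXn e₀ ((n+2)+s) (S.w e x)
            (fun q => (fun r => S.Phl xs ys n (shiftP^[s+1] r)) (prep e q))
          ≤ S.p e x * (S.a ^ n * ((10*S.CZ xs ys+3)
              + 2*S.CZ xs ys*(10*S.CZ xs ys+3)*(∑ i ∈ Finset.range s, S.a^i)
              + (10*S.CZ xs ys+3)*S.a^s*(S.gg xs (S.w e x) + S.gy' ys (S.w e x)))) := by
        intro e
        refine mul_le_mul_of_nonneg_left ?_ (S.p_nonneg _ _)
        have harg : (fun q => (fun r => S.Phl xs ys n (shiftP^[s+1] r)) (prep e q))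
            = fun q => S.Phl xs ys n (shiftP^[s] q) := by
          funext q; simp only [shiftP_iter_prep]
        rw [harg]
        exact ih (S.w e x)
      calc (∑ e : E, _)
          ≤ ∑ e : E, S.p e x * (S.a ^ n * ((10*S.CZ xs ys+3)
              + 2*S.CZ xs ys*(10*S.CZ xs ys+3)*(∑ i ∈ Finset.range s, S.a^i)
              + (10*S.CZ xs ys+3)*S.a^s*(S.gg xs (S.w e x) + S.gy' ys (S.w e x)))) :=
            Finset.sum_le_sum fun e _ => key e
        _ = (S.a ^ n * ((10*S.CZ xs ys+3)
              + 2*S.CZ xs ys*(10*S.CZ xs ys+3)*(∑ i ∈ Finset.range s, S.a^i)))*(∑ e : E, S.p e x)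
            + S.a^n*(10*S.CZ xs ys+3)*S.a^s*
              (∑ e : E, S.p e x * (S.gg xs (S.w e x) + S.gy' ys (S.w e x))) := by
            simp only [Finset.mul_sum, ← Finset.sum_add_distrib]
            refine Finset.sum_congr rfl fun e _ => by ring
        _ ≤ S.a ^ n * ((10*S.CZ xs ys+3)
              + 2*S.CZ xs ys*(10*S.CZ xs ys+3)*(∑ i ∈ Finset.range (s+1), S.a^i)
              + (10*S.CZ xs ys+3)*S.a^(s+1)*(S.gg xs x + S.gy' ys x)) := by
            have hD : ∑ e : E, S.p e x * (S.gg xs (S.w e x) + S.gy' ys (S.w e x))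
                ≤ S.a * (S.gg xs x + S.gy' ys x) + 2 * S.CZ xs ys := by
              have h1 := S.gdrift xs ys hxs x
              have h2 := S.gydrift xs ys hys x
              have : ∑ e : E, S.p e x * (S.gg xs (S.w e x) + S.gy' ys (S.w e x))
                  = (∑ e : E, S.p e x * S.gg xs (S.w e x))
                    + (∑ e : E, S.p e x * S.gy' ys (S.w e x)) := by
                rw [← Finset.sum_add_distrib]
                exact Finset.sum_congr rfl fun e _ => by ring
              rw [this]; linarith
            rw [S.p_sum, mul_one, Finset.sum_range_succ]
            have hcoef : (0:ℝ) ≤ S.a^n*(10*S.CZ xs ys+3)*S.a^s :=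
              mul_nonneg (mul_nonneg han (by linarith)) has
            have := mul_le_mul_of_nonneg_left hD hcoef
            calc S.a ^ n * ((10*S.CZ xs ys+3)
                  + 2*S.CZ xs ys*(10*S.CZ xs ys+3)*(∑ i ∈ Finset.range s, S.a^i))
                + S.a^n*(10*S.CZ xs ys+3)*S.a^s*
                  (∑ e : E, S.p e x * (S.gg xs (S.w e x) + S.gy' ys (S.w e x)))
                ≤ S.a ^ n * ((10*S.CZ xs ys+3)
                  + 2*S.CZ xs ys*(10*S.CZ xs ys+3)*(∑ i ∈ Finset.range s, S.a^i))
                + S.a^n*(10*S.CZ xs ys+3)*S.a^s*(S.a * (S.gg xs x + S.gy' ys x) + 2*S.CZ xs ys) := by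
                  linarith
              _ = S.a ^ n * ((10*S.CZ xs ys+3)
                  + 2*S.CZ xs ys*(10*S.CZ xs ys+3)*((∑ i ∈ Finset.range s, S.a^i) + S.a^s)
                  + (10*S.CZ xs ys+3)*(S.a^s*S.a)*(S.gg xs x + S.gy' ys x)) := by ring
              _ = _ := by rw [← pow_succ]

include hxs hys in
/-- final padded estimate. -/
lemma EXn_pad (e₀ : E) (n s : ℕ) (x : K) :
    S.EXn e₀ ((n+2)+s) x (fun q => S.Phl xs ys n (shiftP^[s] q))
      ≤ S.a ^ n * ((10*S.CZ xs ys+3)*(1 + 2*S.CZ xs ys*(1-S.a)⁻¹)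
          + (10*S.CZ xs ys+3)*(S.gg xs x + S.gy' ys x)) := by
  have h := S.EXn_pad_aux xs ys hxs hys e₀ n s x
  have hC0 : 0 ≤ S.CZ xs ys := S.CZ_nonneg xs ys
  have han : (0:ℝ) ≤ S.a ^ n := pow_nonneg S.ha0.le n
  have hgeo := S.geo_le s
  have hgs : S.a ^ s ≤ 1 := pow_le_one₀ S.ha0.le S.ha1.le
  have hD : 0 ≤ S.gg xs x + S.gy' ys x := by
    have := S.gg_nonneg xs x; have := S.gy'_nonneg ys x; linarith
  refine le_trans h (mul_le_mul_of_nonneg_left ?_ han)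
  have h1 : 2*S.CZ xs ys*(10*S.CZ xs ys+3)*(∑ i ∈ Finset.range s, S.a^i)
      ≤ 2*S.CZ xs ys*(10*S.CZ xs ys+3)*(1-S.a)⁻¹ :=
    mul_le_mul_of_nonneg_left hgeo (by nlinarith)
  have h2 : (10*S.CZ xs ys+3)*S.a^s*(S.gg xs x + S.gy' ys x)
      ≤ (10*S.CZ xs ys+3)*(S.gg xs x + S.gy' ys x) := by
    have : (10*S.CZ xs ys+3)*S.a^s ≤ (10*S.CZ xs ys+3)*1 :=
      mul_le_mul_of_nonneg_left hgs (by linarith)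
    nlinarith
  nlinarith

end CMS

/-- extension of a finite pattern by a junk letter. -/
def extF {E : Type*} (e₀ : E) {j : ℕ} (q : Fin j → E) : ℕ → E :=
  fun n => if h : n < j then q ⟨n, h⟩ else e₀

lemma extF_zero {E : Type*} (e₀ : E) (q : Fin 0 → E) : extF e₀ q = fun _ => e₀ := by
  funext n; simp [extF]

lemma extF_cons {E : Type*} (e₀ : E) {j : ℕ} (e : E) (q : Fin j → E) :
    extF e₀ (Fin.cons e q) = prep e (extF e₀ q) := by
  funext n
  match n with
  | 0 => simp [extF, prep]
  | Nat.succ k =>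
      by_cases hk : k < j
      · have h1 : k + 1 < j + 1 := Nat.succ_lt_succ hk
        have h2 : (⟨k+1, h1⟩ : Fin (j+1)) = (⟨k, hk⟩ : Fin j).succ := rfl
        simp only [extF, prep, dif_pos h1, dif_pos hk, h2, Fin.cons_succ]
      · have h1 : ¬ (k + 1 < j + 1) := fun h => hk (Nat.lt_of_succ_lt_succ h)
        simp only [extF, prep, dif_neg h1, dif_neg hk]

namespace CMS
variable {E V K : Type*} [Fintype E] [MetricSpace K] [MeasurableSpace K] (S : CMS E V K)
set_option linter.unusedSectionVars false

lemma EXn_fin_sum (e₀ : E) (j : ℕ) (x : K) (F : (ℕ → E) → ℝ) :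
    S.EXn e₀ j x F = ∑ q : Fin j → E, S.PPn j x (extF e₀ q) * F (extF e₀ q) := by
  induction j generalizing x F with
  | zero =>
      rw [Fintype.sum_unique]
      rw [extF_zero, PPn_zero, one_mul]
      rfl
  | succ j ih =>
      rw [EXn_succ]
      have hs : ∀ e : E, S.EXn e₀ j (S.w e x) (fun q => F (prep e q))
          = ∑ q : Fin j → E, S.PPn j (S.w e x) (extF e₀ q) * F (prep e (extF e₀ q)) :=
        fun e => ih (S.w e x) (fun q => F (prep e q))
      simp only [hs]
      rw [← Equiv.sum_comp (Fin.consEquiv (fun _ : Fin (j+1) => E))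
        (fun Q : Fin (j+1) → E => S.PPn (j+1) x (extF e₀ Q) * F (extF e₀ Q)),
        Fintype.sum_prod_type]
      refine Finset.sum_congr rfl fun e _ => ?_
      rw [Finset.mul_sum]
      refine Finset.sum_congr rfl fun q _ => ?_
      have hc : (Fin.consEquiv (fun _ : Fin (j+1) => E)) (e, q) = Fin.cons e q := rfl
      rw [hc, extF_cons, PPn_prep]
      ring

end CMS

section Bridge
variable {E V K : Type*} [Fintype E] [MetricSpace K] [MeasurableSpace K]
set_option linter.unusedSectionVars false
set_option maxHeartbeats 1000000

lemma cyl_measurable (m : ℤ) (j : ℕ) (e : ℤ → E) :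
    MeasurableSet[Am E m] (cyl m j e) := by
  have hset : cyl m j e = ⋂ k : ℤ, {σ : ℤ → E | m ≤ k → k ≤ m + j → σ k = e k} := by
    ext σ; simp [cyl, Set.mem_iInter]
  rw [hset]
  refine MeasurableSet.iInter fun k => ?_
  by_cases hk : m ≤ k ∧ k ≤ m + j
  · have hs : {σ : ℤ → E | m ≤ k → k ≤ m + j → σ k = e k}
        = (fun σ : ℤ → E => σ k) ⁻¹' {e k} := by
      ext σ; simp [hk.1, hk.2]
    rw [hs]
    have hle : MeasurableSpace.comap (fun σ : ℤ → E => σ k) ⊤ ≤ Am E m :=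
      le_iSup_of_le k (le_iSup_of_le hk.1 le_rfl)
    exact hle _ (MeasurableSpace.measurableSet_comap.mpr
      ⟨{e k}, MeasurableSpace.measurableSet_top, rfl⟩)
  · have hs : {σ : ℤ → E | m ≤ k → k ≤ m + j → σ k = e k} = Set.univ := by
      ext σ
      simp only [Set.mem_setOf_eq, Set.mem_univ, iff_true]
      intro h1 h2
      exact absurd ⟨h1, h2⟩ hk
    rw [hs]
    exact MeasurableSet.univ

/-- integer-indexed version of a finite pattern, anchored at `-M`. -/
def eeF (e₀ : E) (M : ℕ) (q : Fin (M+1) → E) : ℤ → E :=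
  fun k => extF e₀ q (k + M).toNat

lemma mem_cyl_ee (e₀ : E) (M : ℕ) (q : Fin (M+1) → E) (σ : ℤ → E) :
    σ ∈ cyl (-(M:ℤ)) M (eeF e₀ M q) ↔ ∀ i : Fin (M+1), σ (-(M:ℤ) + i) = q i := by
  constructor
  · intro h i
    have hi : (i : ℕ) < M + 1 := i.isLt
    have h1 : -(M:ℤ) ≤ -(M:ℤ) + i := by push_cast; omega
    have h2 : -(M:ℤ) + i ≤ -(M:ℤ) + M := by push_cast; omega
    have := h (-(M:ℤ) + i) h1 h2
    rw [this]
    have harg : ((-(M:ℤ) + i + M).toNat) = (i : ℕ) := by push_cast; omega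
    rw [eeF, harg, extF, dif_pos hi]
  · intro h k hk1 hk2
    have hn0 : (0:ℤ) ≤ k + M := by omega
    set n : ℕ := (k + M).toNat with hn
    have hkn : k = -(M:ℤ) + n := by rw [hn]; push_cast; omega
    have hnM : n < M + 1 := by omega
    have := h ⟨n, hnM⟩
    simp only [Fin.val_mk] at this
    rw [hkn, this, eeF]
    have harg : ((-(M:ℤ) + n + M).toNat) = n := by push_cast; omega
    rw [harg, extF, dif_pos hnM]

variable (S : CMS E V K)

lemma bridge (P : ∀ m : ℤ, K → @Measure (ℤ → E) (Am E m)) (hP : IsKernel S P)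
    (e₀ : E) (M : ℕ) (x : K) (Q : (ℕ → E) → Prop) [DecidablePred Q]
    (hQ : ∀ r r' : ℕ → E, (∀ k ≤ M, r k = r' k) → (Q r ↔ Q r')) :
    P (-(M:ℤ)) x {σ : ℤ → E | Q (fun k : ℕ => σ (-(M:ℤ) + k))}
      = ENNReal.ofReal (S.EXn e₀ (M+1) x (fun q => if Q q then 1 else 0)) := by
  set T : Finset (Fin (M+1) → E) :=
    Finset.univ.filter (fun q : Fin (M+1) → E => Q (extF e₀ q)) with hT
  have hwin : ∀ σ : ℤ → E, ∀ q : Fin (M+1) → E,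
      (∀ i : Fin (M+1), σ (-(M:ℤ) + i) = q i) →
      (Q (fun k : ℕ => σ (-(M:ℤ) + k)) ↔ Q (extF e₀ q)) := by
    intro σ q hq
    refine hQ _ _ fun k hk => ?_
    have hk1 : k < M + 1 := by omega
    have := hq ⟨k, hk1⟩
    simp only [Fin.val_mk] at this
    rw [this, extF, dif_pos hk1]
  have hU : {σ : ℤ → E | Q (fun k : ℕ => σ (-(M:ℤ) + k))}
      = ⋃ q ∈ T, cyl (-(M:ℤ)) M (eeF e₀ M q) := by
    ext σ
    simp only [Set.mem_setOf_eq, Set.mem_iUnion]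
    constructor
    · intro hσ
      refine ⟨fun i : Fin (M+1) => σ (-(M:ℤ) + i), ?_, ?_⟩
      · rw [hT, Finset.mem_filter]
        refine ⟨Finset.mem_univ _, ?_⟩
        exact (hwin σ _ (fun i => rfl)).mp hσ
      · exact (mem_cyl_ee e₀ M _ σ).mpr (fun i => rfl)
    · rintro ⟨q, hqT, hqc⟩
      have hq := (mem_cyl_ee e₀ M q σ).mp hqc
      rw [hT, Finset.mem_filter] at hqT
      exact (hwin σ q hq).mpr hqT.2
  rw [hU]
  have hdisj : (↑T : Set (Fin (M+1) → E)).PairwiseDisjoint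
      (fun q => cyl (-(M:ℤ)) M (eeF e₀ M q)) := by
    intro q1 _ q2 _ hne
    refine Set.disjoint_left.mpr fun σ h1 h2 => ?_
    have hq1 := (mem_cyl_ee e₀ M q1 σ).mp h1
    have hq2 := (mem_cyl_ee e₀ M q2 σ).mp h2
    exact hne (funext fun i => by rw [← hq1 i, hq2 i])
  have hmeas : ∀ q ∈ T, MeasurableSet[Am E (-(M:ℤ))] (cyl (-(M:ℤ)) M (eeF e₀ M q)) :=
    fun q _ => cyl_measurable _ _ _
  rw [measure_biUnion_finset hdisj hmeas]
  have hcyl : ∀ q : Fin (M+1) → E,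
      P (-(M:ℤ)) x (cyl (-(M:ℤ)) M (eeF e₀ M q))
        = ENNReal.ofReal (S.PPn (M+1) x (extF e₀ q)) := by
    intro q
    rw [hP.2 (-(M:ℤ)) x (eeF e₀ M q) M]
    congr 1
    rw [S.pathProb_PPn]
    congr 1
    funext k
    rw [eeF]
    congr 1
    push_cast; omega
  calc ∑ q ∈ T, P (-(M:ℤ)) x (cyl (-(M:ℤ)) M (eeF e₀ M q))
      = ∑ q ∈ T, ENNReal.ofReal (S.PPn (M+1) x (extF e₀ q)) :=
        Finset.sum_congr rfl fun q _ => hcyl q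
    _ = ENNReal.ofReal (∑ q ∈ T, S.PPn (M+1) x (extF e₀ q)) :=
        (ENNReal.ofReal_sum_of_nonneg fun q _ => S.PPn_nonneg _ _ _).symm
    _ = ENNReal.ofReal (S.EXn e₀ (M+1) x (fun q => if Q q then 1 else 0)) := by
        congr 1
        rw [S.EXn_fin_sum]
        rw [hT, Finset.sum_filter]
        refine Finset.sum_congr rfl fun q _ => ?_
        by_cases hq : Q (extF e₀ q) <;> simp [hq]

end Bridge

namespace CMS
variable {E V K : Type*} [Fintype E] [Fintype V] [MetricSpace K] [MeasurableSpace K] (S : CMS E V K)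
set_option linter.unusedSectionVars false
set_option maxHeartbeats 1000000

variable (xs ys : V → K)

lemma Y_OBn (n : ℕ) (σ : ℤ → E) :
    S.Y xs (-(n:ℤ)) σ = S.OBn (n+1) (xs (S.i (σ (-(n:ℤ))))) (fun k : ℕ => σ (-(n:ℤ) + k)) := by
  have ht : (-(-(n:ℤ))).toNat = n := by simp
  show S.orbit σ (-(n:ℤ)) (xs (S.i (σ (-(n:ℤ))))) ((-(-(n:ℤ))).toNat) = _
  rw [ht, orbit_OBn]

/-- the scale-`n` deviation functional on paths. -/
noncomputable def Phs (n : ℕ) (σ : ℤ → E) : ℝ :=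
  dist (S.Y xs (-(n:ℤ)) σ) (S.Y xs (-(((n:ℕ)+1 : ℕ):ℤ)) σ)
  + dist (S.Y ys (-(n:ℤ)) σ) (S.Y ys (-(((n:ℕ)+1 : ℕ):ℤ)) σ)
  + dist (S.Y xs (-(n:ℤ)) σ) (S.Y ys (-(n:ℤ)) σ)

lemma Phs_eq_Phl (n : ℕ) (σ : ℤ → E) :
    S.Phs xs ys n σ = S.Phl xs ys n (fun k : ℕ => σ (-(((n:ℕ)+1 : ℕ):ℤ) + k)) := by
  have hYx := S.Y_OBn xs n σ
  have hYy := S.Y_OBn ys n σ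
  have hYx' := S.Y_OBn xs (n+1) σ
  have hYy' := S.Y_OBn ys (n+1) σ
  have hWn : (fun k : ℕ => σ (-(n:ℤ) + k))
      = shiftP (fun k : ℕ => σ (-(((n:ℕ)+1 : ℕ):ℤ) + k)) := by
    funext k; simp only [shiftP]; congr 1; push_cast; ring
  have hC1 : σ (-(n:ℤ)) = (fun k : ℕ => σ (-(((n:ℕ)+1 : ℕ):ℤ) + k)) 1 := by
    show _ = σ _; congr 1 <;> (push_cast; ring)
  have hC0 : σ (-(((n:ℕ)+1 : ℕ):ℤ)) = (fun k : ℕ => σ (-(((n:ℕ)+1 : ℕ):ℤ) + k)) 0 := by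
    show _ = σ _; congr 1 <;> (push_cast; ring_nf)
  rw [Phs, Phl, hYx, hYy, hYx', hYy', hWn, hC1, hC0]

lemma Phl_congr (n : ℕ) (q q' : ℕ → E) (h : ∀ k < n + 2, q k = q' k) :
    S.Phl xs ys n q = S.Phl xs ys n q' := by
  have h1 : q 1 = q' 1 := h 1 (by omega)
  have h0 : q 0 = q' 0 := h 0 (by omega)
  have hOB2x : S.OBn (n+2) (xs (S.i (q 0))) q = S.OBn (n+2) (xs (S.i (q' 0))) q' := by
    rw [h0]; exact S.OBn_congr _ _ _ _ fun k hk => h k hk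
  have hOB2y : S.OBn (n+2) (ys (S.i (q 0))) q = S.OBn (n+2) (ys (S.i (q' 0))) q' := by
    rw [h0]; exact S.OBn_congr _ _ _ _ fun k hk => h k hk
  have hOBsx : S.OBn (n+1) (xs (S.i (q 1))) (shiftP q)
      = S.OBn (n+1) (xs (S.i (q' 1))) (shiftP q') := by
    rw [h1]
    exact S.OBn_congr _ _ _ _ fun k hk => h (k+1) (by omega)
  have hOBsy : S.OBn (n+1) (ys (S.i (q 1))) (shiftP q)
      = S.OBn (n+1) (ys (S.i (q' 1))) (shiftP q') := by
    rw [h1]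
    exact S.OBn_congr _ _ _ _ fun k hk => h (k+1) (by omega)
  rw [Phl, Phl, hOB2x, hOB2y, hOBsx, hOBsy]

lemma win_shift (n M : ℕ) (h : n + 1 ≤ M) (σ : ℤ → E) :
    (fun k : ℕ => σ (-(((n:ℕ)+1 : ℕ):ℤ) + k))
      = shiftP^[M - (n+1)] (fun k : ℕ => σ (-(M:ℤ) + k)) := by
  funext k
  rw [shiftP_iter]
  congr 1
  have : ((M - (n+1) : ℕ) : ℤ) = (M:ℤ) - ((n:ℤ)+1) := by
    push_cast [Nat.cast_sub h]; ring
  push_cast [this]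
  ring

/-- the scale-`n` event, written as a window predicate at level `-M`. -/
lemma dev_window (n M : ℕ) (h : n + 1 ≤ M) (c : ℝ) :
    {σ : ℤ → E | c ^ n < S.Phs xs ys n σ}
      = {σ : ℤ → E | (fun r : ℕ → E => c ^ n < S.Phl xs ys n (shiftP^[M - (n+1)] r))
          (fun k : ℕ => σ (-(M:ℤ) + k))} := by
  ext σ
  simp only [Set.mem_setOf_eq]
  rw [S.Phs_eq_Phl xs ys n σ, win_shift n M h]

lemma QD_congr (n M : ℕ) (h : n + 1 ≤ M) (c : ℝ) (r r' : ℕ → E)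
    (hrr : ∀ k ≤ M, r k = r' k) :
    (c ^ n < S.Phl xs ys n (shiftP^[M - (n+1)] r))
      ↔ (c ^ n < S.Phl xs ys n (shiftP^[M - (n+1)] r')) := by
  have : S.Phl xs ys n (shiftP^[M - (n+1)] r) = S.Phl xs ys n (shiftP^[M - (n+1)] r') := by
    refine S.Phl_congr xs ys n _ _ fun k hk => ?_
    rw [shiftP_iter, shiftP_iter]
    exact hrr _ (by omega)
  rw [this]

/-- window sets as finite unions of cylinders. -/
lemma window_eq_biUnion (e₀ : E) (M : ℕ) (Q : (ℕ → E) → Prop) [DecidablePred Q]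
    (hQ : ∀ r r' : ℕ → E, (∀ k ≤ M, r k = r' k) → (Q r ↔ Q r')) :
    {σ : ℤ → E | Q (fun k : ℕ => σ (-(M:ℤ) + k))}
      = ⋃ q ∈ Finset.univ.filter (fun q : Fin (M+1) → E => Q (extF e₀ q)),
          cyl (-(M:ℤ)) M (eeF e₀ M q) := by
  have hwin : ∀ σ : ℤ → E, ∀ q : Fin (M+1) → E,
      (∀ i : Fin (M+1), σ (-(M:ℤ) + i) = q i) →
      (Q (fun k : ℕ => σ (-(M:ℤ) + k)) ↔ Q (extF e₀ q)) := by
    intro σ q hq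
    refine hQ _ _ fun k hk => ?_
    have hk1 : k < M + 1 := by omega
    have := hq ⟨k, hk1⟩
    simp only [Fin.val_mk] at this
    rw [this, extF, dif_pos hk1]
  ext σ
  simp only [Set.mem_setOf_eq, Set.mem_iUnion]
  constructor
  · intro hσ
    refine ⟨fun i : Fin (M+1) => σ (-(M:ℤ) + i), ?_, ?_⟩
    · rw [Finset.mem_filter]
      exact ⟨Finset.mem_univ _, (hwin σ _ (fun i => rfl)).mp hσ⟩
    · exact (mem_cyl_ee e₀ M _ σ).mpr (fun i => rfl)
  · rintro ⟨q, hqT, hqc⟩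
    have hq := (mem_cyl_ee e₀ M q σ).mp hqc
    rw [Finset.mem_filter] at hqT
    exact (hwin σ q hq).mpr hqT.2

/-- measurability of window sets. -/
lemma window_meas (e₀ : E) (M : ℕ) (Q : (ℕ → E) → Prop) [DecidablePred Q]
    (hQ : ∀ r r' : ℕ → E, (∀ k ≤ M, r k = r' k) → (Q r ↔ Q r')) :
    MeasurableSet[Am E (-(M:ℤ))] {σ : ℤ → E | Q (fun k : ℕ => σ (-(M:ℤ) + k))} := by
  rw [window_eq_biUnion e₀ M Q hQ]
  exact Finset.measurableSet_biUnion _ fun q _ => cyl_measurable _ _ _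

end CMS

lemma geo_sum_le' {c : ℝ} (h0 : 0 ≤ c) (h1 : c < 1) (s : ℕ) :
    ∑ i ∈ Finset.range s, c ^ i ≤ (1 - c)⁻¹ := by
  have h := geom_sum_mul c s
  have hpos : 0 < 1 - c := by linarith
  rw [inv_eq_one_div, le_div_iff₀ hpos]
  nlinarith [pow_nonneg h0 s]

lemma geo_Ioc_le {c : ℝ} (h0 : 0 ≤ c) (h1 : c < 1) (l m : ℕ) :
    ∑ n ∈ Finset.Ioc l m, c ^ n ≤ c ^ l * (1 - c)⁻¹ := by
  have hset : Finset.Ioc l m = Finset.Ico (l+1) (m+1) := by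
    ext k; simp only [Finset.mem_Ioc, Finset.mem_Ico]; omega
  rw [hset, Finset.sum_Ico_eq_sum_range]
  have : ∀ i : ℕ, c ^ (l + 1 + i) = c ^ (l+1) * c ^ i := fun i => pow_add c (l+1) i
  simp only [this, ← Finset.mul_sum]
  have hg := geo_sum_le' h0 h1 (m + 1 - (l + 1))
  have hcl : c ^ (l+1) ≤ c ^ l := by
    rw [pow_succ]
    nlinarith [pow_nonneg h0 l]
  have hinv : (0:ℝ) ≤ (1 - c)⁻¹ := by
    have : 0 < 1 - c := by linarith
    positivity
  have h2 : c ^ (l+1) * ∑ i ∈ Finset.range (m + 1 - (l + 1)), c ^ i ≤ c ^ (l+1) * (1-c)⁻¹ :=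
    mul_le_mul_of_nonneg_left hg (pow_nonneg h0 _)
  nlinarith

namespace CMS
variable {E V K : Type*} [Fintype E] [Fintype V] [MetricSpace K] [MeasurableSpace K] (S : CMS E V K)
set_option linter.unusedSectionVars false
set_option maxHeartbeats 1000000

variable (xs ys : V → K) (hxs : ∀ v, xs v ∈ S.Ks v) (hys : ∀ v, ys v ∈ S.Ks v)

include hxs hys in
lemma dev_bound (P : ∀ m : ℤ, K → @Measure (ℤ → E) (Am E m)) (hP : IsKernel S P)
    (e₀ : E) (c : ℝ) (hc0 : 0 < c) (hca : c * c = S.a)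
    (n M : ℕ) (h : n + 1 ≤ M) (x : K) :
    P (-(M:ℤ)) x {σ : ℤ → E | c ^ n < S.Phs xs ys n σ}
      ≤ ENNReal.ofReal (c ^ n * ((10*S.CZ xs ys+3)*(1 + 2*S.CZ xs ys*(1-S.a)⁻¹)
          + (10*S.CZ xs ys+3)*(S.gg xs x + S.gy' ys x))) := by
  classical
  rw [S.dev_window xs ys n M h c]
  rw [bridge S P hP e₀ M x _ (fun r r' hrr => S.QD_congr xs ys n M h c r r' hrr)]
  refine ENNReal.ofReal_le_ofReal ?_
  have hcn : (0:ℝ) < c ^ n := pow_pos hc0 n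
  have hmark : ∀ r : ℕ → E,
      (if c ^ n < S.Phl xs ys n (shiftP^[M - (n+1)] r) then (1:ℝ) else 0)
        ≤ (c ^ n)⁻¹ * S.Phl xs ys n (shiftP^[M - (n+1)] r) := by
    intro r
    by_cases hr : c ^ n < S.Phl xs ys n (shiftP^[M - (n+1)] r)
    · rw [if_pos hr]
      have := mul_le_mul_of_nonneg_left hr.le (inv_nonneg.mpr hcn.le)
      rwa [inv_mul_cancel₀ hcn.ne'] at this
    · rw [if_neg hr]
      exact mul_nonneg (inv_nonneg.mpr hcn.le) (S.Phl_nonneg xs ys n _)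
  have h1 := S.EXn_mono e₀ (M+1) x hmark
  rw [S.EXn_smul] at h1
  have hMs : M + 1 = (n+2) + (M - (n+1)) := by omega
  have h3 := S.EXn_pad xs ys hxs hys e₀ n (M-(n+1)) x
  rw [← hMs] at h3
  have h4 : (c ^ n)⁻¹ * S.EXn e₀ (M+1) x (fun r => S.Phl xs ys n (shiftP^[M - (n+1)] r))
      ≤ (c ^ n)⁻¹ * (S.a ^ n * ((10*S.CZ xs ys+3)*(1 + 2*S.CZ xs ys*(1-S.a)⁻¹)
          + (10*S.CZ xs ys+3)*(S.gg xs x + S.gy' ys x))) :=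
    mul_le_mul_of_nonneg_left h3 (inv_nonneg.mpr hcn.le)
  have h5 : (c ^ n)⁻¹ * (S.a ^ n * ((10*S.CZ xs ys+3)*(1 + 2*S.CZ xs ys*(1-S.a)⁻¹)
          + (10*S.CZ xs ys+3)*(S.gg xs x + S.gy' ys x)))
      = c ^ n * ((10*S.CZ xs ys+3)*(1 + 2*S.CZ xs ys*(1-S.a)⁻¹)
          + (10*S.CZ xs ys+3)*(S.gg xs x + S.gy' ys x)) := by
    have ha : S.a ^ n = c ^ n * c ^ n := by rw [← hca, mul_pow]
    rw [ha, ← mul_assoc, ← mul_assoc, inv_mul_cancel₀ hcn.ne', one_mul]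
  calc S.EXn e₀ (M+1) x (fun q => if c ^ n < S.Phl xs ys n (shiftP^[M - (n+1)] q) then (1:ℝ) else 0)
      ≤ (c ^ n)⁻¹ * S.EXn e₀ (M+1) x (fun r => S.Phl xs ys n (shiftP^[M - (n+1)] r)) := h1
    _ ≤ _ := by rw [← h5] at *; exact h4

end CMS

namespace CMS
variable {E V K : Type*} [Fintype E] [Fintype V] [MetricSpace K] [MeasurableSpace K] (S : CMS E V K)
set_option linter.unusedSectionVars false
set_option maxHeartbeats 1000000

variable (xs ys : V → K) (hxs : ∀ v, xs v ∈ S.Ks v) (hys : ∀ v, ys v ∈ S.Ks v)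

lemma D_le_Gm (x : K) :
    S.gg xs x + S.gy' ys x ≤ ∑ v : V, (dist x (xs v) + dist x (ys v)) := by
  have h := Finset.single_le_sum (f := fun v : V => dist x (xs v) + dist x (ys v))
    (fun v _ => by positivity) (Finset.mem_univ (S.vert x))
  simpa [gg, gy'] using h

include hxs hys in
lemma band_cost (P : ∀ m : ℤ, K → @Measure (ℤ → E) (Am E m)) (hP : IsKernel S P)
    (e₀ : E) (c : ℝ) (hc0 : 0 < c) (hc1 : c < 1) (hca : c * c = S.a)
    (ν : Measure K) [IsProbabilityMeasure ν]
    (l m : ℕ) (hlm : l < m) (ρ : ℝ)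
    (hGmeas : MeasurableSet {x : K | ρ < ∑ v : V, (dist x (xs v) + dist x (ys v))}) :
    liftMeas P (-(((m:ℕ)+1 : ℕ):ℤ)) ν
        (⋃ n ∈ Finset.Ioc l m, {σ : ℤ → E | c ^ n < S.Phs xs ys n σ})
      ≤ ENNReal.ofReal (c ^ l * (1-c)⁻¹ *
            ((10*S.CZ xs ys+3)*(1 + 2*S.CZ xs ys*(1-S.a)⁻¹) + (10*S.CZ xs ys+3) * ρ))
        + ν {x : K | ρ < ∑ v : V, (dist x (xs v) + dist x (ys v))} := by
  classical
  set CC : ℝ := (10*S.CZ xs ys+3)*(1 + 2*S.CZ xs ys*(1-S.a)⁻¹) with hCC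
  set C₁ : ℝ := (10*S.CZ xs ys+3) with hC₁
  have hCZ : 0 ≤ S.CZ xs ys := S.CZ_nonneg xs ys
  have hγ : (0:ℝ) ≤ (1 - S.a)⁻¹ := by
    have : (0:ℝ) < 1 - S.a := by linarith [S.ha1]
    positivity
  have hCCpos : 0 ≤ CC := by rw [hCC]; positivity
  have hC₁pos : 0 ≤ C₁ := by rw [hC₁]; positivity
  have hγc : (0:ℝ) ≤ (1 - c)⁻¹ := by
    have : (0:ℝ) < 1 - c := by linarith
    positivity
  -- pointwise bound
  have hpt : ∀ x : K, P (-(((m:ℕ)+1 : ℕ):ℤ)) x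
      (⋃ n ∈ Finset.Ioc l m, {σ : ℤ → E | c ^ n < S.Phs xs ys n σ})
      ≤ ENNReal.ofReal (c ^ l * (1-c)⁻¹ * (CC + C₁ * ρ))
        + Set.indicator {x : K | ρ < ∑ v : V, (dist x (xs v) + dist x (ys v))} 1 x := by
    intro x
    have hD : 0 ≤ S.gg xs x + S.gy' ys x := by
      have := S.gg_nonneg xs x; have := S.gy'_nonneg ys x; linarith
    have hbound : P (-(((m:ℕ)+1 : ℕ):ℤ)) x
        (⋃ n ∈ Finset.Ioc l m, {σ : ℤ → E | c ^ n < S.Phs xs ys n σ})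
        ≤ ENNReal.ofReal (c ^ l * (1-c)⁻¹ * (CC + C₁ * (S.gg xs x + S.gy' ys x))) := by
      calc P (-(((m:ℕ)+1 : ℕ):ℤ)) x (⋃ n ∈ Finset.Ioc l m, {σ : ℤ → E | c ^ n < S.Phs xs ys n σ})
          ≤ ∑ n ∈ Finset.Ioc l m, P (-(((m:ℕ)+1 : ℕ):ℤ)) x {σ : ℤ → E | c ^ n < S.Phs xs ys n σ} :=
            measure_biUnion_finset_le _ _
        _ ≤ ∑ n ∈ Finset.Ioc l m, ENNReal.ofReal (c ^ n * (CC + C₁ * (S.gg xs x + S.gy' ys x))) := by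
            refine Finset.sum_le_sum fun n hn => ?_
            have hn' : n + 1 ≤ m + 1 := by
              rw [Finset.mem_Ioc] at hn; omega
            exact S.dev_bound xs ys hxs hys P hP e₀ c hc0 hca n (m+1) hn' x
        _ = ENNReal.ofReal (∑ n ∈ Finset.Ioc l m, c ^ n * (CC + C₁ * (S.gg xs x + S.gy' ys x))) :=
            (ENNReal.ofReal_sum_of_nonneg fun n _ => by positivity).symm
        _ ≤ ENNReal.ofReal (c ^ l * (1-c)⁻¹ * (CC + C₁ * (S.gg xs x + S.gy' ys x))) := by
            refine ENNReal.ofReal_le_ofReal ?_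
            rw [← Finset.sum_mul]
            have hgeo := geo_Ioc_le hc0.le hc1 l m
            have hfac : 0 ≤ CC + C₁ * (S.gg xs x + S.gy' ys x) := by positivity
            exact mul_le_mul_of_nonneg_right hgeo hfac
    by_cases hx : ρ < ∑ v : V, (dist x (xs v) + dist x (ys v))
    · have h1 : P (-(((m:ℕ)+1 : ℕ):ℤ)) x
          (⋃ n ∈ Finset.Ioc l m, {σ : ℤ → E | c ^ n < S.Phs xs ys n σ}) ≤ 1 := by
        haveI := hP.1 (-(((m:ℕ)+1 : ℕ):ℤ)) x
        exact prob_le_one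
      have hind : Set.indicator {x : K | ρ < ∑ v : V, (dist x (xs v) + dist x (ys v))}
          (1 : K → ℝ≥0∞) x = 1 := Set.indicator_of_mem hx 1
      rw [hind]
      exact h1.trans le_add_self
    · have hDρ : S.gg xs x + S.gy' ys x ≤ ρ := by
        have := S.D_le_Gm xs ys x
        push_neg at hx
        linarith
      have hmono : ENNReal.ofReal (c ^ l * (1-c)⁻¹ * (CC + C₁ * (S.gg xs x + S.gy' ys x)))
          ≤ ENNReal.ofReal (c ^ l * (1-c)⁻¹ * (CC + C₁ * ρ)) := by
        refine ENNReal.ofReal_le_ofReal ?_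
        have h01 : 0 ≤ c ^ l * (1-c)⁻¹ := by positivity
        refine mul_le_mul_of_nonneg_left ?_ h01
        nlinarith
      exact (hbound.trans hmono).trans le_self_add
  -- integrate
  calc liftMeas P (-(((m:ℕ)+1 : ℕ):ℤ)) ν
        (⋃ n ∈ Finset.Ioc l m, {σ : ℤ → E | c ^ n < S.Phs xs ys n σ})
      ≤ ∫⁻ x, (ENNReal.ofReal (c ^ l * (1-c)⁻¹ * (CC + C₁ * ρ))
          + Set.indicator {x : K | ρ < ∑ v : V, (dist x (xs v) + dist x (ys v))} 1 x) ∂ν :=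
        lintegral_mono hpt
    _ = ENNReal.ofReal (c ^ l * (1-c)⁻¹ * (CC + C₁ * ρ))
        + ν {x : K | ρ < ∑ v : V, (dist x (xs v) + dist x (ys v))} := by
        rw [lintegral_add_left measurable_const, lintegral_const, measure_univ, mul_one,
          lintegral_indicator_one hGmeas]

end CMS


set_option maxHeartbeats 2000000 in
/-- under Dini-continuity and the lower bound `δ > 0` on the probability
functions, for every Borel probability `ν` and all `x_i, y_i ∈ K_i`: `Φ(ν)`-a.e. the limit
defining `F_{x_1…x_N}` exists and agrees with the one defining `F_{y_1…y_N}`. -/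
theorem statement11 {E V K : Type*} [Fintype E] [Fintype V] [MetricSpace K] [CompleteSpace K]
    [MeasurableSpace K] [BorelSpace K] (S : CMS E V K)
    (P : ∀ m : ℤ, K → @Measure (ℤ → E) (Am E m)) (hP : IsKernel S P)
    (φ : E → ℝ → ℝ) (hφmono : ∀ e, Monotone (φ e)) (hφ0 : ∀ e t, 0 ≤ φ e t)
    (hmod : ∀ e, ∀ u ∈ S.Ks (S.i e), ∀ v ∈ S.Ks (S.i e), ∀ t : ℝ,
      dist u v ≤ t → |S.p e u - S.p e v| ≤ φ e t)
    (hdini : ∀ e, ∃ c > (0 : ℝ), MeasureTheory.IntegrableOn (fun t => φ e t / t) (Set.Ioc 0 c))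
    (δ : ℝ) (hδ : 0 < δ) (hlow : ∀ e, ∀ u ∈ S.Ks (S.i e), δ ≤ S.p e u)
    (ν : Measure K) [IsProbabilityMeasure ν]
    (xs ys : V → K) (hxs : ∀ v, xs v ∈ S.Ks v) (hys : ∀ v, ys v ∈ S.Ks v) :
    PhiM P ν {σ : ℤ → E | ¬ ∃ L : K,
      Tendsto (fun n : ℕ => S.Y xs (-(n : ℤ)) σ) atTop (nhds L) ∧
      Tendsto (fun n : ℕ => S.Y ys (-(n : ℤ)) σ) atTop (nhds L)} = 0 := by
  classical
  set B : Set (ℤ → E) := {σ : ℤ → E | ¬ ∃ L : K,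
      Tendsto (fun n : ℕ => S.Y xs (-(n : ℤ)) σ) atTop (nhds L) ∧
      Tendsto (fun n : ℕ => S.Y ys (-(n : ℤ)) σ) atTop (nhds L)} with hB
  -- nonemptiness
  have hKne : Nonempty K := by
    by_contra h
    rw [not_nonempty_iff] at h
    have h1 : ν Set.univ = 1 := measure_univ
    rw [Set.univ_eq_empty_iff.mpr h, measure_empty] at h1
    norm_num at h1
  obtain ⟨x₀⟩ := hKne
  have hEne : Nonempty E := by
    by_contra h
    rw [not_nonempty_iff] at h
    have h1 := S.p_sum x₀
    rw [Finset.univ_eq_empty, Finset.sum_empty] at h1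
    norm_num at h1
  obtain ⟨e₀⟩ := hEne
  -- the contraction base
  set c : ℝ := Real.sqrt S.a with hcdef
  have hc0 : 0 < c := Real.sqrt_pos.mpr S.ha0
  have hca : c * c = S.a := Real.mul_self_sqrt S.ha0.le
  have hc1 : c < 1 := by nlinarith [S.ha1]
  -- constants
  set CC : ℝ := (10*S.CZ xs ys+3)*(1 + 2*S.CZ xs ys*(1-S.a)⁻¹) with hCC
  set C₁ : ℝ := (10*S.CZ xs ys+3) with hC₁
  have hCZ : 0 ≤ S.CZ xs ys := S.CZ_nonneg xs ys
  have hγ : (0:ℝ) ≤ (1 - S.a)⁻¹ := by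
    have : (0:ℝ) < 1 - S.a := by linarith [S.ha1]
    positivity
  have hCCpos : 0 ≤ CC := by rw [hCC]; positivity
  have hC₁pos : 0 ≤ C₁ := by rw [hC₁]; positivity
  have hγc : (0:ℝ) ≤ (1 - c)⁻¹ := by
    have : (0:ℝ) < 1 - c := by linarith
    positivity
  -- the measurable size function
  set Gm : K → ℝ := fun x => ∑ v : V, (dist x (xs v) + dist x (ys v)) with hGm
  have hGmMeas : Measurable Gm := by
    apply Continuous.measurable
    apply continuous_finset_sum
    intro v _
    exact (continuous_id.dist continuous_const).add (continuous_id.dist continuous_const)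
  have hsetmeas : ∀ r : ℝ, MeasurableSet {x : K | r < Gm x} :=
    fun r => measurableSet_lt measurable_const hGmMeas
  -- tail choice
  have hν : ∀ t : ℕ, ∃ ρ : ℕ, ν {x : K | (ρ:ℝ) < Gm x} ≤ 2⁻¹ ^ t := by
    intro t
    have hs : ∀ r : ℕ, NullMeasurableSet {x : K | (r:ℝ) < Gm x} ν :=
      fun r => (hsetmeas r).nullMeasurableSet
    have hanti : Antitone (fun r : ℕ => {x : K | (r:ℝ) < Gm x}) := by
      intro r r' hrr x hx
      simp only [Set.mem_setOf_eq] at hx ⊢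
      have : (r:ℝ) ≤ r' := by exact_mod_cast hrr
      linarith
    have hfin : ∃ r : ℕ, ν {x : K | (r:ℝ) < Gm x} ≠ ⊤ := ⟨0, measure_ne_top ν _⟩
    have htend := tendsto_measure_iInter_atTop (μ := ν) hs hanti hfin
    have hempty : (⋂ r : ℕ, {x : K | (r:ℝ) < Gm x}) = ∅ := by
      rw [Set.eq_empty_iff_forall_notMem]
      intro x hx
      simp only [Set.mem_iInter, Set.mem_setOf_eq] at hx
      obtain ⟨r, hr⟩ := exists_nat_ge (Gm x)
      exact absurd (hx r) (not_lt.mpr hr)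
    rw [hempty, measure_empty] at htend
    have hpos : (0:ℝ≥0∞) < 2⁻¹ ^ t := by
      apply ENNReal.pow_pos
      simp
    have := (htend.eventually_lt_const hpos).exists
    obtain ⟨r, hr⟩ := this
    exact ⟨r, hr.le⟩
  choose ρfun hρ using hν
  -- exponent choice
  have hA : ∀ t : ℕ, ∃ k : ℕ, c ^ k * ((1-c)⁻¹ * (CC + C₁ * (ρfun t : ℝ))) ≤ (2⁻¹:ℝ) ^ t := by
    intro t
    set Big : ℝ := (1-c)⁻¹ * (CC + C₁ * (ρfun t : ℝ)) with hBig
    have hBig0 : 0 ≤ Big := by rw [hBig]; positivity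
    have hεpos : (0:ℝ) < (2⁻¹:ℝ) ^ t / (Big + 1) := by positivity
    obtain ⟨k, hk⟩ := exists_pow_lt_of_lt_one hεpos hc1
    refine ⟨k, ?_⟩
    have h1 : c ^ k * Big ≤ ((2⁻¹:ℝ) ^ t / (Big + 1)) * Big :=
      mul_le_mul_of_nonneg_right hk.le hBig0
    have h2 : ((2⁻¹:ℝ) ^ t / (Big + 1)) * Big ≤ (2⁻¹:ℝ) ^ t := by
      rw [div_mul_eq_mul_div, div_le_iff₀ (by linarith)]
      nlinarith [pow_nonneg (by norm_num : (0:ℝ) ≤ 2⁻¹) t]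
    linarith
  choose Afun hAfun using hA
  -- the band cut points
  obtain ⟨nseq, hn0, hnsucc⟩ : ∃ f : ℕ → ℕ, f 0 = Afun 0 ∧
      ∀ t, f (t+1) = max (f t + 1) (Afun (t+1)) :=
    ⟨fun t => Nat.rec (Afun 0) (fun t ih => max (ih + 1) (Afun (t+1))) t, rfl, fun t => rfl⟩
  have hnmono : StrictMono nseq := by
    apply strictMono_nat_of_lt_succ
    intro t
    rw [hnsucc]
    omega
  have hnA : ∀ t, Afun t ≤ nseq t := by
    intro t
    cases t with
    | zero => rw [hn0]
    | succ t => rw [hnsucc]; omega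
  -- the band events
  set W : ℕ → Set (ℤ → E) := fun t =>
    ⋃ n ∈ Finset.Ioc (nseq t) (nseq (t+1)), {σ : ℤ → E | c ^ n < S.Phs xs ys n σ} with hW
  -- cost of a band
  have hcost : ∀ t : ℕ, liftMeas P (-(((nseq (t+1)):ℕ)+1 : ℕ):ℤ) ν (W t)
      ≤ 2 * 2⁻¹ ^ t := by
    intro t
    have hbc := S.band_cost xs ys hxs hys P hP e₀ c hc0 hc1 hca ν (nseq t) (nseq (t+1))
      (hnmono (Nat.lt_succ_self t)) (ρfun t : ℝ) (hsetmeas _)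
    simp only [hW]
    refine hbc.trans ?_
    have hreal : c ^ (nseq t) * (1-c)⁻¹ *
        ((10*S.CZ xs ys+3)*(1 + 2*S.CZ xs ys*(1-S.a)⁻¹) + (10*S.CZ xs ys+3) * (ρfun t : ℝ))
        ≤ (2⁻¹:ℝ) ^ t := by
      have h1 : c ^ (nseq t) ≤ c ^ (Afun t) :=
        pow_le_pow_of_le_one hc0.le hc1.le (hnA t)
      have h2 : (0:ℝ) ≤ (1-c)⁻¹ * (CC + C₁ * (ρfun t : ℝ)) := by positivity
      have h3 : c ^ (nseq t) * ((1-c)⁻¹ * (CC + C₁ * (ρfun t : ℝ)))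
          ≤ c ^ (Afun t) * ((1-c)⁻¹ * (CC + C₁ * (ρfun t : ℝ))) :=
        mul_le_mul_of_nonneg_right h1 h2
      calc c ^ (nseq t) * (1-c)⁻¹ * ((10*S.CZ xs ys+3)*(1 + 2*S.CZ xs ys*(1-S.a)⁻¹)
              + (10*S.CZ xs ys+3) * (ρfun t : ℝ))
          = c ^ (nseq t) * ((1-c)⁻¹ * (CC + C₁ * (ρfun t : ℝ))) := by rw [hCC, hC₁]; ring
        _ ≤ c ^ (Afun t) * ((1-c)⁻¹ * (CC + C₁ * (ρfun t : ℝ))) := h3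
        _ ≤ (2⁻¹:ℝ) ^ t := hAfun t
    have hofr : ENNReal.ofReal (c ^ (nseq t) * (1-c)⁻¹ *
        ((10*S.CZ xs ys+3)*(1 + 2*S.CZ xs ys*(1-S.a)⁻¹) + (10*S.CZ xs ys+3) * (ρfun t : ℝ)))
        ≤ (2⁻¹ : ℝ≥0∞) ^ t := by
      refine (ENNReal.ofReal_le_ofReal hreal).trans ?_
      rw [ENNReal.ofReal_pow (by norm_num : (0:ℝ) ≤ 2⁻¹)]
      have : ENNReal.ofReal (2⁻¹:ℝ) = (2⁻¹ : ℝ≥0∞) := by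
        rw [ENNReal.ofReal_inv_of_pos (by norm_num)]
        norm_num
      rw [this]
    have := add_le_add hofr (hρ t)
    refine le_trans (add_le_add hofr (hρ t)) ?_
    rw [two_mul]
  -- the improvement: PhiM ≤ 4 * 2⁻¹ ^ T for every T
  have key : ∀ T : ℕ, PhiM P ν B ≤ 4 * 2⁻¹ ^ T := by
    intro T
    set A : ℕ → Set (ℤ → E) := fun k =>
      ⋃ (t : ℕ), ⋃ (_ : T ≤ t ∧ nseq (t+1) + 1 = k), W t with hA
    -- measurability
    have hmeasA : ∀ k : ℕ, MeasurableSet[Am E (-(k : ℤ))] (A k) := by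
      intro k
      refine MeasurableSet.iUnion fun t => MeasurableSet.iUnion fun ht => ?_
      obtain ⟨hTt, hk⟩ := ht
      subst hk
      simp only [hW]
      refine Finset.measurableSet_biUnion _ fun n hn => ?_
      rw [Finset.mem_Ioc] at hn
      have hnk : n + 1 ≤ nseq (t+1) + 1 := by omega
      rw [S.dev_window xs ys n (nseq (t+1) + 1) hnk c]
      exact CMS.window_meas e₀ (nseq (t+1) + 1) _
        (fun r r' hrr => S.QD_congr xs ys n (nseq (t+1) + 1) hnk c r r' hrr)
    -- coverage
    have hcover : B ⊆ ⋃ k, A k := by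
      intro σ hσ
      have hWt : ∃ t, T ≤ t ∧ σ ∈ W t := by
        by_contra hcon
        push_neg at hcon
        -- all scales beyond nseq T are good
        have hgood : ∀ n : ℕ, nseq T < n → S.Phs xs ys n σ ≤ c ^ n := by
          intro n hn
          -- locate the band
          have hTn : T ≤ n := le_trans (hnmono.le_apply : T ≤ nseq T) hn.le
          have hPT : nseq T < n := hn
          set tstar : ℕ := Nat.findGreatest (fun s => nseq s < n) n with htstar
          have hspec : nseq tstar < n := Nat.findGreatest_spec (P := fun s => nseq s < n) hTn hPT
          have hTt : T ≤ tstar := Nat.le_findGreatest (P := fun s => nseq s < n) hTn hPT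
          have hnext : n ≤ nseq (tstar + 1) := by
            by_contra hc2
            push_neg at hc2
            have htstarn : tstar + 1 ≤ n := by
              have h5 : tstar ≤ nseq tstar := hnmono.le_apply
              omega
            exact absurd hc2 (Nat.findGreatest_is_greatest (P := fun s => nseq s < n)
              (Nat.lt_succ_self tstar) htstarn)
          have hnW := hcon tstar hTt
          simp only [hW, Set.mem_iUnion, Set.mem_setOf_eq, Finset.mem_Ioc, not_exists] at hnW
          by_contra hlt
          push_neg at hlt
          exact hnW n ⟨hspec, hnext⟩ hlt
        -- convergence
        exfalso
        set f : ℕ → K := fun n => S.Y xs (-(n : ℤ)) σ with hf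
        set fy : ℕ → K := fun n => S.Y ys (-(n : ℤ)) σ with hfy
        set N₀ : ℕ := nseq T + 1 with hN₀
        have hd1 : ∀ n, N₀ ≤ n → dist (f n) (f (n+1)) ≤ c ^ n := by
          intro n hn
          have := hgood n (by omega)
          rw [CMS.Phs] at this
          have d2 : 0 ≤ dist (S.Y ys (-(n:ℤ)) σ) (S.Y ys (-(((n:ℕ)+1 : ℕ):ℤ)) σ) := dist_nonneg
          have d3 : 0 ≤ dist (S.Y xs (-(n:ℤ)) σ) (S.Y ys (-(n:ℤ)) σ) := dist_nonneg
          simp only [hf]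
          linarith
        have hd2 : ∀ n, N₀ ≤ n → dist (fy n) (fy (n+1)) ≤ c ^ n := by
          intro n hn
          have := hgood n (by omega)
          rw [CMS.Phs] at this
          have d1 : 0 ≤ dist (S.Y xs (-(n:ℤ)) σ) (S.Y xs (-(((n:ℕ)+1 : ℕ):ℤ)) σ) := dist_nonneg
          have d3 : 0 ≤ dist (S.Y xs (-(n:ℤ)) σ) (S.Y ys (-(n:ℤ)) σ) := dist_nonneg
          simp only [hfy]
          linarith
        have hd3 : ∀ n, N₀ ≤ n → dist (f n) (fy n) ≤ c ^ n := by
          intro n hn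
          have := hgood n (by omega)
          rw [CMS.Phs] at this
          have d1 : 0 ≤ dist (S.Y xs (-(n:ℤ)) σ) (S.Y xs (-(((n:ℕ)+1 : ℕ):ℤ)) σ) := dist_nonneg
          have d2 : 0 ≤ dist (S.Y ys (-(n:ℤ)) σ) (S.Y ys (-(((n:ℕ)+1 : ℕ):ℤ)) σ) := dist_nonneg
          simp only [hf, hfy]
          linarith
        have hsum : ∀ (g : ℕ → K), (∀ n, N₀ ≤ n → dist (g n) (g (n+1)) ≤ c ^ n) →
            Summable (fun n => dist (g n) (g (n+1))) := by
          intro g hg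
          rw [← summable_nat_add_iff N₀]
          refine Summable.of_nonneg_of_le (fun n => dist_nonneg) (fun n => ?_)
            (((summable_geometric_of_lt_one hc0.le hc1).mul_left (c ^ N₀)))
          have := hg (n + N₀) (by omega)
          calc dist (g (n + N₀)) (g (n + N₀ + 1)) ≤ c ^ (n + N₀) := this
            _ = c ^ N₀ * c ^ n := by rw [pow_add]; ring
        obtain ⟨L, hL⟩ := cauchySeq_tendsto_of_complete
          (cauchySeq_of_summable_dist (hsum f hd1))
        obtain ⟨L', hL'⟩ := cauchySeq_tendsto_of_complete
          (cauchySeq_of_summable_dist (hsum fy hd2))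
        have hdist : Tendsto (fun n => dist (f n) (fy n)) atTop (nhds (dist L L')) :=
          hL.dist hL'
        have hzero : Tendsto (fun n => dist (f n) (fy n)) atTop (nhds 0) := by
          refine squeeze_zero' (Filter.Eventually.of_forall fun n => dist_nonneg) ?_
            (tendsto_pow_atTop_nhds_zero_of_lt_one hc0.le hc1)
          exact Filter.eventually_atTop.mpr ⟨N₀, hd3⟩
        have hLL' : L = L' := by
          have := tendsto_nhds_unique hdist hzero
          exact dist_eq_zero.mp this
        rw [hB] at hσ
        exact hσ ⟨L, hL, hLL' ▸ hL'⟩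
      obtain ⟨t, hTt, hσW⟩ := hWt
      refine Set.mem_iUnion.mpr ⟨nseq (t+1) + 1, ?_⟩
      rw [hA]
      exact Set.mem_iUnion.mpr ⟨t, Set.mem_iUnion.mpr ⟨⟨hTt, rfl⟩, hσW⟩⟩
    -- the covering sum
    have hPhiM : PhiM P ν B ≤ ∑' k : ℕ, liftMeas P (-(k : ℤ)) ν (A k) := by
      rw [PhiM]
      refine iInf_le_of_le A ?_
      refine iInf_le_of_le hmeasA ?_
      exact iInf_le _ hcover
    -- reindex and sum
    set i : ℕ → ℕ := fun s => nseq (T + s + 1) + 1 with hi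
    have hiinj : Function.Injective i := by
      intro s s' hss
      rw [hi] at hss
      simp only at hss
      have := hnmono.injective (by omega : nseq (T + s + 1) = nseq (T + s' + 1))
      omega
    set H : ℕ → ℝ≥0∞ := fun k => liftMeas P (-(k : ℤ)) ν (A k) with hHdef
    have hzero : ∀ k, k ∉ Set.range i → H k = 0 := by
      intro k hk
      have hAk : A k = ∅ := by
        rw [hA]
        rw [Set.eq_empty_iff_forall_notMem]
        intro σ hσ
        simp only [Set.mem_iUnion] at hσ
        obtain ⟨t, ⟨hTt, hkt⟩, _⟩ := hσ
        refine hk ⟨t - T, ?_⟩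
        rw [hi]
        simp only
        have : T + (t - T) = t := by omega
        rw [this, hkt]
      rw [hHdef]
      simp only [hAk]
      rw [liftMeas]
      simp
    have htsum : ∑' s : ℕ, H (i s) = ∑' k : ℕ, H k :=
      hiinj.tsum_eq (Function.support_subset_iff'.mpr hzero)
    have hHi : ∀ s : ℕ, H (i s) ≤ 2 * 2⁻¹ ^ (T + s) := by
      intro s
      have hAeq : A (i s) = W (T + s) := by
        rw [hA, hi]
        apply Set.Subset.antisymm
        · intro σ hσ
          simp only [Set.mem_iUnion] at hσ
          obtain ⟨t, ⟨hTt, hkt⟩, hσW⟩ := hσ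
          have : t = T + s := by
            have := hnmono.injective (by omega : nseq (t+1) = nseq (T + s + 1))
            omega
          rwa [this] at hσW
        · intro σ hσ
          simp only [Set.mem_iUnion]
          exact ⟨T + s, ⟨by omega, rfl⟩, hσ⟩
      simp only [hHdef]
      rw [hAeq]
      have := hcost (T + s)
      have hcast : (-(((nseq (T+s+1)):ℕ)+1 : ℕ):ℤ) = (-(i s : ℤ)) := by
        simp [hi]
      rw [hcast] at this
      exact this
    have hsumbound : ∑' k : ℕ, H k ≤ 4 * 2⁻¹ ^ T := by
      rw [← htsum]
      calc ∑' s : ℕ, H (i s) ≤ ∑' s : ℕ, 2 * 2⁻¹ ^ (T + s) := ENNReal.tsum_le_tsum hHi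
        _ = 2 * 2⁻¹ ^ T * ∑' s : ℕ, 2⁻¹ ^ s := by
            rw [← ENNReal.tsum_mul_left]
            congr 1
            funext s
            rw [pow_add]
            ring
        _ = 4 * 2⁻¹ ^ T := by
            rw [ENNReal.tsum_geometric]
            have h2 : (1 : ℝ≥0∞) - 2⁻¹ = 2⁻¹ := by
              rw [← ENNReal.inv_two_add_inv_two, ENNReal.add_sub_cancel_right]
              exact ENNReal.inv_ne_top.mpr (by norm_num)
            rw [h2, inv_inv]
            ring
    exact hPhiM.trans hsumbound
  -- conclusion
  have htend : Tendsto (fun T : ℕ => (4:ℝ≥0∞) * 2⁻¹ ^ T) atTop (nhds 0) := by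
    have h1 : Tendsto (fun T : ℕ => (2⁻¹:ℝ≥0∞) ^ T) atTop (nhds 0) :=
      ENNReal.tendsto_pow_atTop_nhds_zero_of_lt_one (by
        rw [ENNReal.inv_lt_one]
        exact one_lt_two)
    have := ENNReal.Tendsto.const_mul h1 (Or.inr (by norm_num : (4:ℝ≥0∞) ≠ ⊤))
    simpa using this
  have hle : PhiM P ν B ≤ 0 := ge_of_tendsto' htend key
  exact le_antisymm hle zero_le
end
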